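/- arXiv:2306.09791 — 10 statements merged into one kernel-verified Lean document; each statement's English description precedes it below -/
import Mathlib

section
/- Let (a_n) be a sequence of nonnegative reals with ∑ a_n ≤ B for a natural number B. Then for every ε > 0 and every function f : ℕ → ℕ, there exists n ≤ Ψ(B,ε,f) such that a_i ≤ ε for all i ∈ [n, n+f(n)], where Ψ(B,ε,f) := f̌^(R)(0) with f̌(p) := p + f(p) + 1 and R := ⌊B/ε⌋. -/
theorem stmt_0 (a : ℕ → ℝ) (ha : ∀ n, 0 ≤ a n) (B : ℕ)
    (hsum : Summable a) (hB : ∑' n, a n ≤ B) :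
    ∀ ε > (0:ℝ), ∀ f : ℕ → ℕ,
      ∃ n ≤ (fun p => p + f p + 1)^[⌊(B : ℝ) / ε⌋₊] 0,
        ∀ i ∈ Finset.Icc n (n + f n), a i ≤ ε := by
  intro ε hε f
  by_contra h
  push_neg at h
  set g : ℕ → ℕ := fun p => p + f p + 1 with hg
  set R := ⌊(B : ℝ) / ε⌋₊ with hR
  have hid : id ≤ g := fun p => by simp [hg]; omega
  have hmono : Monotone fun m => g^[m] 0 :=
    fun m m' hmm => Function.monotone_iterate_of_id_le hid hmm 0
  have key : ∀ k, k ≤ R + 1 → (k : ℝ) * ε ≤ ∑ i ∈ Finset.range (g^[k] 0), a i := by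
    intro k hk
    induction k with
    | zero => simp
    | succ k ih =>
      have ih' := ih (Nat.le_of_succ_le hk)
      have hle : g^[k] 0 ≤ g^[R] 0 := hmono (by omega)
      obtain ⟨i, hi, hai⟩ := h (g^[k] 0) hle
      rw [Finset.mem_Icc] at hi
      set n := g^[k] 0 with hn
      have hiter : g^[k+1] 0 = n + f n + 1 := by
        rw [Function.iterate_succ_apply', ← hn]
      rw [hiter]
      have hsplit : ∑ j ∈ Finset.range (n + f n + 1), a j =
          ∑ j ∈ Finset.range n, a j + ∑ j ∈ Finset.Ico n (n + f n + 1), a j := by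
        rw [Finset.range_eq_Ico, Finset.range_eq_Ico]
        exact (Finset.sum_Ico_consecutive a (Nat.zero_le n) (by omega : n ≤ n + f n + 1)).symm
      have hsingle : a i ≤ ∑ j ∈ Finset.Ico n (n + f n + 1), a j :=
        Finset.single_le_sum (fun j _ => ha j) (Finset.mem_Ico.mpr ⟨hi.1, by omega⟩)
      push_cast
      rw [hsplit]
      nlinarith
  have hfin := key (R + 1) le_rfl
  have hsum_le : ∑ i ∈ Finset.range (g^[R+1] 0), a i ≤ ∑' n, a n :=
    Summable.sum_le_tsum _ (fun j _ => ha j) hsum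
  have hBlt : (B : ℝ) < (R + 1) * ε := by
    have := Nat.lt_floor_add_one ((B : ℝ) / ε)
    rw [div_lt_iff₀ hε] at this
    exact this
  push_cast at hfin
  linarith
end

section
/- Let (a_n) be a sequence of nonnegative reals with ∑ a_n² ≤ B for B ∈ ℕ, let s_n := ∑_{k=0}^n a_k (with s_j := 0 for j < 0), and let m ≥ 2. Then for every ε > 0 and N ∈ ℕ there exists n ∈ [N, N + φ_B(m,ε,N)] such that s_n·(s_n − s_{n−m−1}) ≤ ε, where φ_B(m,ε,N) := ⌊e^{((m+1)B/ε)²}⌋·(N+1). -/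
lemma harmlog_aux (c x : ℝ) (hc : 0 ≤ c) (hx : 0 < x) (J : ℕ) :
    Real.log (x + J * c) - Real.log x ≤ c * ∑ j ∈ Finset.range J, 1 / (x + j * c) := by
  induction J with
  | zero => simp
  | succ J ih =>
    rw [Finset.sum_range_succ, mul_add]
    have hy : (0:ℝ) < x + J * c := by positivity
    have hz : (0:ℝ) < x + (J+1) * c := by positivity
    have key : Real.log (x + (J+1) * c) - Real.log (x + J*c) ≤ c * (1 / (x + J*c)) := by
      rw [show Real.log (x + (J+1)*c) - Real.log (x + J*c)
            = Real.log ((x + (J+1)*c)/(x + J*c)) by rw [Real.log_div hz.ne' hy.ne']]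
      have h1 := Real.log_le_sub_one_of_pos (show (0:ℝ) < (x + (J+1)*c)/(x+J*c) by positivity)
      have h2 : (x + (J+1)*c)/(x+J*c) - 1 = c * (1 / (x + J*c)) := by
        field_simp; ring
      linarith
    push_cast at key ⊢
    linarith

set_option maxHeartbeats 1000000 in
theorem stmt_1 (a : ℕ → ℝ) (ha : ∀ n, 0 ≤ a n) (B : ℕ)
    (hsum : Summable (fun n => (a n) ^ 2)) (hB : ∑' n, (a n) ^ 2 ≤ B)
    (s : ℤ → ℝ) (hs : ∀ n : ℤ, s n = ∑ k ∈ Finset.range (n + 1).toNat, a k)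
    (m : ℕ) (hm : 2 ≤ m) :
    ∀ ε > (0:ℝ), ∀ N : ℕ,
      ∃ n ∈ Finset.Icc N (N + ⌊Real.exp ((((m : ℝ) + 1) * B / ε) ^ 2)⌋₊ * (N + 1)),
        s n * (s n - s ((n : ℤ) - m - 1)) ≤ ε := by
  intro ε hε N
  have hsn : ∀ n : ℕ, s n = ∑ k ∈ Finset.range (n+1), a k := by
    intro n
    have h1 : ((n:ℤ) + 1).toNat = n + 1 := by omega
    rw [hs, h1]
  -- case B = 0
  rcases Nat.eq_zero_or_pos B with hB0 | hBpos
  · refine ⟨N, by simp, ?_⟩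
    have haz : ∀ k, a k = 0 := by
      intro k
      have h1 : a k ^ 2 ≤ ∑' n, a n ^ 2 := Summable.le_tsum hsum k (fun _ _ => sq_nonneg _)
      rw [hB0] at hB
      push_cast at hB
      nlinarith [ha k]
    have hz : ∀ z : ℤ, s z = 0 := fun z => by
      rw [hs]; exact Finset.sum_eq_zero fun k _ => haz k
    rw [hz, hz]; simp [hε.le]
  have hB1 : (1:ℝ) ≤ B := by exact_mod_cast hBpos
  set E := ⌊Real.exp ((((m : ℝ) + 1) * B / ε) ^ 2)⌋₊ with hE
  by_contra hcon
  push_neg at hcon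
  set L := E * (N + 1) with hL
  set J := L / (m+1) + 1 with hJ
  have hdiff : ∀ n : ℕ, s n - s ((n:ℤ) - m - 1) = ∑ k ∈ Finset.Ico (n+1-(m+1)) (n+1), a k := by
    intro n
    have h1 : ((n:ℤ) - m - 1 + 1).toNat = n + 1 - (m+1) := by omega
    rw [hsn, hs, h1, Finset.sum_Ico_eq_sub _ (by omega)]
  -- per-n key inequality
  have key : ∀ n ∈ Finset.Icc N (N + L),
      ε^2 / (((m:ℝ)+1) * B) * (1 / ((n:ℝ)+1)) < ∑ k ∈ Finset.Ico (n+1-(m+1)) (n+1), a k ^ 2 := by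
    intro n hn
    have h1 := hcon n hn
    rw [hdiff, hsn] at h1
    set S := ∑ k ∈ Finset.range (n+1), a k with hS
    set d := ∑ k ∈ Finset.Ico (n+1-(m+1)) (n+1), a k with hd
    set Q := ∑ k ∈ Finset.Ico (n+1-(m+1)) (n+1), a k ^ 2 with hQ
    set R := ∑ k ∈ Finset.range (n+1), a k ^ 2 with hR
    have hS0 : 0 ≤ S := Finset.sum_nonneg fun k _ => ha k
    have hd0 : 0 ≤ d := Finset.sum_nonneg fun k _ => ha k
    have hQ0 : 0 ≤ Q := Finset.sum_nonneg fun k _ => sq_nonneg _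
    have hR0 : 0 ≤ R := Finset.sum_nonneg fun k _ => sq_nonneg _
    have cs1 : S^2 ≤ ((n:ℝ)+1) * R := by
      have h2 := sq_sum_le_card_mul_sum_sq (s := Finset.range (n+1)) (f := a)
      rw [Finset.card_range] at h2
      push_cast at h2
      exact h2
    have cs2 : d^2 ≤ ((m:ℝ)+1) * Q := by
      have h2 := sq_sum_le_card_mul_sum_sq (s := Finset.Ico (n+1-(m+1)) (n+1)) (f := a)
      have hcard : ((Finset.Ico (n+1-(m+1)) (n+1)).card : ℝ) ≤ (m:ℝ)+1 := by
        rw [Nat.card_Ico]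
        have : n + 1 - (n+1-(m+1)) ≤ m + 1 := by omega
        exact_mod_cast this
      calc d^2 ≤ ((Finset.Ico (n+1-(m+1)) (n+1)).card : ℝ) * Q := h2
        _ ≤ ((m:ℝ)+1) * Q := by nlinarith
    have hRB : R ≤ (B:ℝ) :=
      le_trans (Summable.sum_le_tsum _ (fun k _ => sq_nonneg _) hsum) hB
    have e0 : ε^2 < (S*d)^2 := by nlinarith
    have e1 : S^2*d^2 ≤ (((n:ℝ)+1)*R)*(((m:ℝ)+1)*Q) :=
      mul_le_mul cs1 cs2 (sq_nonneg d) (by positivity)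
    have e2 : (((n:ℝ)+1)*R)*(((m:ℝ)+1)*Q) ≤ (((n:ℝ)+1)*B)*(((m:ℝ)+1)*Q) :=
      mul_le_mul_of_nonneg_right (mul_le_mul_of_nonneg_left hRB (by positivity)) (by positivity)
    rw [mul_pow] at e0
    have e3 : ε^2 < (((n:ℝ)+1)*B)*(((m:ℝ)+1)*Q) := by linarith
    rw [show ε^2 / (((m:ℝ)+1) * B) * (1 / ((n:ℝ)+1)) = ε^2 / ((((m:ℝ)+1) * B) * ((n:ℝ)+1)) by
      field_simp]
    rw [div_lt_iff₀ (by positivity)]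
    exact lt_of_lt_of_le e3 (le_of_eq (by ring))
  -- blocks
  set blk : ℕ → Finset ℕ := fun j => Finset.Ico (N + j*(m+1) + 1 - (m+1)) (N + j*(m+1) + 1) with hblk
  have hdisj2 : ∀ i j : ℕ, i < j → Disjoint (blk i) (blk j) := by
    intro i j hij
    rw [Finset.disjoint_left]
    intro x hxi hxj
    rw [hblk, Finset.mem_Ico] at hxi hxj
    have hmul : (i+1)*(m+1) ≤ j*(m+1) := Nat.mul_le_mul_right _ hij
    have hmul2 : (i+1)*(m+1) = i*(m+1) + (m+1) := by ring
    omega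
  have hdisj : (↑(Finset.range J) : Set ℕ).PairwiseDisjoint blk := by
    intro i _ j _ hne
    rcases lt_or_gt_of_ne hne with h | h
    · exact hdisj2 i j h
    · exact (hdisj2 j i h).symm
  have hmem : ∀ j < J, N + j*(m+1) ∈ Finset.Icc N (N + L) := by
    intro j hj
    have h1 : j ≤ L / (m+1) := by omega
    have h2 : j * (m+1) ≤ (L/(m+1)) * (m+1) := Nat.mul_le_mul_right _ h1
    have h3 : (L/(m+1)) * (m+1) ≤ L := Nat.div_mul_le_self L (m+1)
    simp only [Finset.mem_Icc]
    omega
  have hQB : ∑ j ∈ Finset.range J, ∑ k ∈ blk j, a k ^ 2 ≤ (B:ℝ) := by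
    rw [← Finset.sum_biUnion hdisj]
    exact le_trans (Summable.sum_le_tsum _ (fun k _ => sq_nonneg _) hsum) hB
  set T := ∑ j ∈ Finset.range J, 1 / (((N:ℝ)+1) + j*((m:ℝ)+1)) with hT
  have hA : ε^2 / (((m:ℝ)+1) * B) * T ≤ (B:ℝ) := by
    rw [hT, Finset.mul_sum]
    refine le_trans (Finset.sum_le_sum ?_) hQB
    intro j hj
    rw [Finset.mem_range] at hj
    have h1 := key (N + j*(m+1)) (hmem j hj)
    have h2 : ((N + j*(m+1) : ℕ) : ℝ) + 1 = ((N:ℝ)+1) + j*((m:ℝ)+1) := by push_cast; ring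
    rw [h2] at h1
    exact le_of_lt (by simpa [hblk] using h1)
  -- harmonic lower bound
  have hharm := harmlog_aux ((m:ℝ)+1) ((N:ℝ)+1) (by positivity) (by positivity) J
  have hJm : L + 1 ≤ J * (m+1) := by
    have h3 := Nat.div_add_mod L (m+1)
    have h4 := Nat.mod_lt L (show 0 < m+1 by omega)
    have h5 : J * (m+1) = (m+1) * (L/(m+1)) + (m+1) := by rw [hJ]; ring
    omega
  have hEx : Real.exp ((((m : ℝ) + 1) * B / ε) ^ 2) < (E:ℝ) + 1 := Nat.lt_floor_add_one _
  have hexp : ((N:ℝ)+1) * Real.exp ((((m : ℝ) + 1) * B / ε) ^ 2) < ((N:ℝ)+1) + J*((m:ℝ)+1) := by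
    have h1 : ((L:ℝ)) + 1 ≤ (J:ℝ) * ((m:ℝ)+1) := by exact_mod_cast hJm
    have h2 : ((L:ℝ)) = (E:ℝ) * ((N:ℝ)+1) := by rw [hL]; push_cast; ring
    nlinarith [hEx, h1, h2]
  have hlog : Real.log (((N:ℝ)+1) * Real.exp ((((m : ℝ) + 1) * B / ε) ^ 2))
      < Real.log (((N:ℝ)+1) + J*((m:ℝ)+1)) :=
    Real.log_lt_log (by positivity) hexp
  rw [Real.log_mul (by positivity) (Real.exp_ne_zero _), Real.log_exp] at hlog
  have hB2 : ((((m : ℝ) + 1) * B / ε) ^ 2) < ((m:ℝ)+1) * T := by linarith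
  -- contradiction
  have hA' : ε^2 * T ≤ (B:ℝ) * (((m:ℝ)+1) * B) := by
    rw [div_mul_eq_mul_div, div_le_iff₀ (by positivity)] at hA
    linarith
  rw [div_pow, div_lt_iff₀ (by positivity : (0:ℝ) < ε^2)] at hB2
  nlinarith [hA', hB2, hε, hB1]
end

section
/- For the Dykstra iteration, for every n ∈ ℕ one has ∑_{k=n−m+1}^{n} ‖q_k‖ ≤ ∑_{k=0}^{n−1} ‖x_k − x_{k+1}‖. -/
open scoped RealInnerProductSpace

lemma sum_Icc_top_int (f : ℤ → ℝ) (a b : ℤ) (h : a ≤ b + 1) :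
    ∑ k ∈ Finset.Icc a (b + 1), f k = (∑ k ∈ Finset.Icc a b, f k) + f (b + 1) := by
  have : Finset.Icc a (b + 1) = insert (b + 1) (Finset.Icc a b) := by
    ext k; simp [Finset.mem_Icc, Finset.mem_insert]; omega
  rw [this, Finset.sum_insert (by simp [Finset.mem_Icc]), add_comm]

lemma sum_Icc_bot_int (f : ℤ → ℝ) (a b : ℤ) (h : a ≤ b) :
    ∑ k ∈ Finset.Icc a b, f k = f a + ∑ k ∈ Finset.Icc (a + 1) b, f k := by
  have : Finset.Icc a b = insert a (Finset.Icc (a + 1) b) := by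
    ext k; simp [Finset.mem_Icc, Finset.mem_insert]; omega
  rw [this, Finset.sum_insert (by simp [Finset.mem_Icc])]

theorem stmt_9
    (X : Type*) [NormedAddCommGroup X] [InnerProductSpace ℝ X]
    (m : ℕ) (hm : 2 ≤ m)
    (C : ℤ → Set X) (hCcl : ∀ n, IsClosed (C n)) (hCconv : ∀ n, Convex ℝ (C n))
    (hCne : (⋂ j ∈ Finset.Icc (1:ℤ) m, C j).Nonempty)
    (hCper : ∀ n : ℤ, C (n + m) = C n)
    (P : ℤ → X → X)
    (hP : ∀ j (y : X), P j y ∈ C j ∧ ∀ w ∈ C j, ‖y - P j y‖ ≤ ‖y - w‖)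
    (x q : ℤ → X) (hq0 : ∀ k : ℤ, k ≤ 0 → q k = 0)
    (hxdef : ∀ n : ℤ, 1 ≤ n → x n = P n (x (n - 1) + q (n - m)))
    (hqdef : ∀ n : ℤ, 1 ≤ n → q n = x (n - 1) + q (n - m) - x n)
    : ∀ n : ℤ, 0 ≤ n →
      ∑ k ∈ Finset.Icc (n - m + 1) n, ‖q k‖ ≤ ∑ k ∈ Finset.Icc 0 (n - 1), ‖x k - x (k + 1)‖ := by
  have hm1 : (2:ℤ) ≤ (m:ℤ) := by exact_mod_cast hm
  refine Int.le_induction ?_ ?_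
  ·
    have h1 : ∀ k ∈ Finset.Icc ((0:ℤ) - m + 1) 0, ‖q k‖ = 0 := by
      intro k hk
      rw [Finset.mem_Icc] at hk
      rw [hq0 k hk.2, norm_zero]
    rw [Finset.sum_congr rfl h1]
    simp
  · intro n hn ih
    -- key norm inequality
    have hq : ‖q (n + 1)‖ ≤ ‖x n - x (n + 1)‖ + ‖q (n - m + 1)‖ := by
      have h := hqdef (n + 1) (by omega)
      have e1 : (n + 1 - 1 : ℤ) = n := by ring
      have e2 : (n + 1 - m : ℤ) = n - m + 1 := by ring
      rw [e1, e2] at h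
      rw [h]
      have : x n + q (n - m + 1) - x (n + 1)
          = (x n - x (n + 1)) + q (n - m + 1) := by abel
      rw [this]
      exact norm_add_le _ _
    -- split LHS
    have hL : ∑ k ∈ Finset.Icc (n + 1 - m + 1) (n + 1), ‖q k‖
        = (∑ k ∈ Finset.Icc (n - m + 2) n, ‖q k‖) + ‖q (n + 1)‖ := by
      have e : (n + 1 - m + 1 : ℤ) = n - m + 2 := by ring
      rw [e, sum_Icc_top_int _ _ _ (by omega)]
    have hL' : ∑ k ∈ Finset.Icc (n - m + 1) n, ‖q k‖
        = ‖q (n - m + 1)‖ + ∑ k ∈ Finset.Icc (n - m + 2) n, ‖q k‖ := by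
      rw [sum_Icc_bot_int _ _ _ (by omega)]
      norm_num [show (n - m + 1 + 1 : ℤ) = n - m + 2 by ring]
    -- split RHS
    have hR : ∑ k ∈ Finset.Icc (0:ℤ) (n + 1 - 1), ‖x k - x (k + 1)‖
        = (∑ k ∈ Finset.Icc (0:ℤ) (n - 1), ‖x k - x (k + 1)‖) + ‖x n - x (n + 1)‖ := by
      have e : (n + 1 - 1 : ℤ) = (n - 1) + 1 := by ring
      rw [e, sum_Icc_top_int _ _ _ (by omega)]
      norm_num [show (n - 1 + 1 : ℤ) = n by ring]
    rw [hL, hR]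
    have : (∑ k ∈ Finset.Icc (n - m + 2) n, ‖q k‖) + ‖q (n + 1)‖
        ≤ (‖q (n - m + 1)‖ + ∑ k ∈ Finset.Icc (n - m + 2) n, ‖q k‖) + ‖x n - x (n + 1)‖ := by
      linarith
    calc (∑ k ∈ Finset.Icc (n - m + 2) n, ‖q k‖) + ‖q (n + 1)‖
        ≤ (∑ k ∈ Finset.Icc (n - m + 1) n, ‖q k‖) + ‖x n - x (n + 1)‖ := by
          rw [hL']; linarith
      _ ≤ (∑ k ∈ Finset.Icc (0:ℤ) (n - 1), ‖x k - x (k + 1)‖) + ‖x n - x (n + 1)‖ := by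
          linarith
end

section
/- For the Dykstra iteration and any z ∈ X and i ≥ n ≥ 0: ‖x_n − z‖² = ‖x_i − z‖² + ∑_{k=n}^{i−1}(‖x_k − x_{k+1}‖² + 2⟨x_{k−m+1} − x_{k+1}, q_{k−m+1}⟩) + 2∑_{k=i−m+1}^{i}⟨x_k − z, q_k⟩ − 2∑_{k=n−m+1}^{n}⟨x_k − z, q_k⟩. -/
open scoped RealInnerProductSpace

theorem stmt_10
    (X : Type*) [NormedAddCommGroup X] [InnerProductSpace ℝ X]
    (m : ℕ) (hm : 2 ≤ m)
    (C : ℤ → Set X) (hCcl : ∀ n, IsClosed (C n)) (hCconv : ∀ n, Convex ℝ (C n))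
    (hCne : (⋂ j ∈ Finset.Icc (1:ℤ) m, C j).Nonempty)
    (hCper : ∀ n : ℤ, C (n + m) = C n)
    (P : ℤ → X → X)
    (hP : ∀ j (y : X), P j y ∈ C j ∧ ∀ w ∈ C j, ‖y - P j y‖ ≤ ‖y - w‖)
    (x q : ℤ → X) (hq0 : ∀ k : ℤ, k ≤ 0 → q k = 0)
    (hxdef : ∀ n : ℤ, 1 ≤ n → x n = P n (x (n - 1) + q (n - m)))
    (hqdef : ∀ n : ℤ, 1 ≤ n → q n = x (n - 1) + q (n - m) - x n)
    : ∀ z : X, ∀ n i : ℤ, 0 ≤ n → n ≤ i →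
      ‖x n - z‖ ^ 2 = ‖x i - z‖ ^ 2
        + ∑ k ∈ Finset.Icc n (i - 1),
            (‖x k - x (k + 1)‖ ^ 2 + 2 * ⟪x (k - m + 1) - x (k + 1), q (k - m + 1)⟫)
        + 2 * ∑ k ∈ Finset.Icc (i - m + 1) i, ⟪x k - z, q k⟫
        - 2 * ∑ k ∈ Finset.Icc (n - m + 1) n, ⟪x k - z, q k⟫ := by
  intro z n i hn hni
  refine Int.le_induction (motive := fun j _ =>
      ‖x n - z‖ ^ 2 = ‖x j - z‖ ^ 2
        + ∑ k ∈ Finset.Icc n (j - 1),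
            (‖x k - x (k + 1)‖ ^ 2 + 2 * ⟪x (k - m + 1) - x (k + 1), q (k - m + 1)⟫)
        + 2 * ∑ k ∈ Finset.Icc (j - m + 1) j, ⟪x k - z, q k⟫
        - 2 * ∑ k ∈ Finset.Icc (n - m + 1) n, ⟪x k - z, q k⟫) ?_ ?_ i hni
  · beta_reduce
    have he : Finset.Icc n (n - 1) = ∅ := Finset.Icc_eq_empty (by omega)
    rw [he, Finset.sum_empty]
    ring
  · intro i hi ih
    beta_reduce
    beta_reduce at ih
    -- one-step identity
    have hd : x i - x (i + 1) = q (i + 1) - q (i - m + 1) := by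
      have h := hqdef (i + 1) (by omega)
      have e1 : (i : ℤ) + 1 - 1 = i := by ring
      have e2 : (i : ℤ) + 1 - m = i - m + 1 := by ring
      rw [e1, e2] at h
      rw [h]; abel
    have hstep : ‖x i - z‖ ^ 2
        = ‖x (i + 1) - z‖ ^ 2 + ‖x i - x (i + 1)‖ ^ 2
          + 2 * ⟪x (i + 1) - z, q (i + 1)⟫ - 2 * ⟪x (i + 1) - z, q (i - m + 1)⟫ := by
      have h0 : x i - z = (x (i + 1) - z) + (x i - x (i + 1)) := by abel
      rw [h0, norm_add_sq_real, hd, inner_sub_right]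
      ring
    -- sum manipulations
    have hmid : ∑ k ∈ Finset.Icc n (i + 1 - 1),
          (‖x k - x (k + 1)‖ ^ 2 + 2 * ⟪x (k - m + 1) - x (k + 1), q (k - m + 1)⟫)
        = (∑ k ∈ Finset.Icc n (i - 1),
            (‖x k - x (k + 1)‖ ^ 2 + 2 * ⟪x (k - m + 1) - x (k + 1), q (k - m + 1)⟫))
          + (‖x i - x (i + 1)‖ ^ 2 + 2 * ⟪x (i - m + 1) - x (i + 1), q (i - m + 1)⟫) := by
      have e : (i : ℤ) + 1 - 1 = i := by ring
      rw [e]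
      have : Finset.Icc n i = insert i (Finset.Icc n (i - 1)) := by
        ext k; simp [Finset.mem_Icc, Finset.mem_insert]; omega
      rw [this, Finset.sum_insert (by simp only [Finset.mem_Icc]; omega)]
      ring
    have hlast : ∑ k ∈ Finset.Icc (i + 1 - m + 1) (i + 1), ⟪x k - z, q k⟫
        = (∑ k ∈ Finset.Icc (i - m + 1) i, ⟪x k - z, q k⟫)
          + ⟪x (i + 1) - z, q (i + 1)⟫ - ⟪x (i - m + 1) - z, q (i - m + 1)⟫ := by
      have key : ∑ k ∈ Finset.Icc (i - m + 1) (i + 1), ⟪x k - z, q k⟫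
          = (∑ k ∈ Finset.Icc (i - m + 1) i, ⟪x k - z, q k⟫) + ⟪x (i + 1) - z, q (i + 1)⟫ := by
        have : Finset.Icc (i - m + 1) (i + 1) = insert (i + 1) (Finset.Icc (i - m + 1) i) := by
          ext k; simp [Finset.mem_Icc, Finset.mem_insert]; omega
        rw [this, Finset.sum_insert (by simp only [Finset.mem_Icc]; omega)]
        ring
      have key2 : ∑ k ∈ Finset.Icc (i - m + 1) (i + 1), ⟪x k - z, q k⟫
          = (∑ k ∈ Finset.Icc (i + 1 - m + 1) (i + 1), ⟪x k - z, q k⟫)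
            + ⟪x (i - m + 1) - z, q (i - m + 1)⟫ := by
        have : Finset.Icc (i - m + 1) (i + 1)
            = insert (i - m + 1) (Finset.Icc (i + 1 - m + 1) (i + 1)) := by
          ext k; simp [Finset.mem_Icc, Finset.mem_insert]; omega
        rw [this, Finset.sum_insert (by simp only [Finset.mem_Icc]; omega)]
        ring
      linarith [key, key2]
    have hcross : ⟪x (i - m + 1) - x (i + 1), q (i - m + 1)⟫
        = ⟪x (i - m + 1) - z, q (i - m + 1)⟫ - ⟪x (i + 1) - z, q (i - m + 1)⟫ := by
      rw [← inner_sub_left]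
      congr 1
      abel
    rw [hstep] at ih
    rw [hmid, hlast]
    linarith [ih, hcross]
end

section
/- For the Dykstra iteration and any z ∈ X and i ≥ n ≥ 0: ‖x_i − z‖² ≤ ‖x_n − z‖² + 2∑_{k=n−m+1}^{n}⟨x_k − z, q_k⟩ − 2∑_{k=i−m+1}^{i}⟨x_k − z, q_k⟩. -/
open scoped RealInnerProductSpace

theorem stmt_11
    (X : Type*) [NormedAddCommGroup X] [InnerProductSpace ℝ X]
    (m : ℕ) (hm : 2 ≤ m)
    (C : ℤ → Set X) (hCcl : ∀ n, IsClosed (C n)) (hCconv : ∀ n, Convex ℝ (C n))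
    (hCne : (⋂ j ∈ Finset.Icc (1:ℤ) m, C j).Nonempty)
    (hCper : ∀ n : ℤ, C (n + m) = C n)
    (P : ℤ → X → X)
    (hP : ∀ j (y : X), P j y ∈ C j ∧ ∀ w ∈ C j, ‖y - P j y‖ ≤ ‖y - w‖)
    (x q : ℤ → X) (hq0 : ∀ k : ℤ, k ≤ 0 → q k = 0)
    (hxdef : ∀ n : ℤ, 1 ≤ n → x n = P n (x (n - 1) + q (n - m)))
    (hqdef : ∀ n : ℤ, 1 ≤ n → q n = x (n - 1) + q (n - m) - x n)
    : ∀ z : X, ∀ n i : ℤ, 0 ≤ n → n ≤ i →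
      ‖x i - z‖ ^ 2 ≤ ‖x n - z‖ ^ 2
        + 2 * ∑ k ∈ Finset.Icc (n - m + 1) n, ⟪x k - z, q k⟫
        - 2 * ∑ k ∈ Finset.Icc (i - m + 1) i, ⟪x k - z, q k⟫ := by
  -- variational inequality for the projections
  have hvar : ∀ j (y : X), ∀ w ∈ C j, ⟪y - P j y, w - P j y⟫ ≤ 0 := by
    intro j y w hw
    have hPy := (hP j y).1
    haveI : Nonempty (C j) := ⟨⟨P j y, hPy⟩⟩
    have hinf : ‖y - P j y‖ = ⨅ w : C j, ‖y - w‖ := by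
      apply le_antisymm
      · exact le_ciInf fun w => (hP j y).2 w w.2
      · have hbdd : BddBelow (Set.range fun w : C j => ‖y - (w : X)‖) := by
          refine ⟨0, ?_⟩
          rintro b ⟨w, rfl⟩
          exact norm_nonneg _
        exact ciInf_le hbdd ⟨P j y, hPy⟩
    exact (norm_eq_iInf_iff_real_inner_le_zero (hCconv j) hPy).mp hinf w hw
  intro z n i hn hni
  -- nonnegativity of the cross term
  have hcross : ∀ k : ℤ, 0 ≤ k →
      0 ≤ ⟪x (k + 1 - m) - x (k + 1), q (k + 1 - m)⟫ := by
    intro k hk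
    by_cases hle : k + 1 - (m : ℤ) ≤ 0
    · simp [hq0 _ hle]
    · have hj : 1 ≤ k + 1 - (m : ℤ) := by omega
      have hx := hxdef (k + 1 - m) hj
      have hqj := hqdef (k + 1 - m) hj
      have hmem : x (k + 1) ∈ C (k + 1 - m) := by
        have h1 : x (k + 1) ∈ C (k + 1) := by
          rw [hxdef (k + 1) (by omega)]; exact (hP _ _).1
        have h2 : C (k + 1 - m + m) = C (k + 1 - m) := hCper _
        rw [show (k + 1 - (m : ℤ) + m) = k + 1 by ring] at h2
        rwa [← h2]
      have hle2 := hvar (k + 1 - m) (x (k + 1 - m - 1) + q (k + 1 - m - m)) (x (k + 1)) hmem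
      rw [← hx] at hle2
      have hq' : x (k + 1 - m - 1) + q (k + 1 - m - m) - x (k + 1 - m) = q (k + 1 - m) := by
        rw [hqj]
      rw [hq'] at hle2
      have heq : ⟪x (k + 1 - m) - x (k + 1), q (k + 1 - m)⟫
          = -⟪q (k + 1 - m), x (k + 1) - x (k + 1 - m)⟫ := by
        rw [show x (k + 1 - (m : ℤ)) - x (k + 1) = -(x (k + 1) - x (k + 1 - (m : ℤ))) from by
          abel, inner_neg_left, real_inner_comm]
      rw [heq]
      linarith
  -- key one-step inequality
  have key : ∀ k : ℤ, 0 ≤ k →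
      ‖x (k + 1) - z‖ ^ 2 + 2 * ⟪x (k + 1) - z, q (k + 1)⟫ ≤
        ‖x k - z‖ ^ 2 + 2 * ⟪x (k + 1 - m) - z, q (k + 1 - m)⟫ := by
    intro k hk
    have hq1 : q (k + 1) = x k + q (k + 1 - m) - x (k + 1) := by
      have := hqdef (k + 1) (by omega)
      rwa [show (k + 1 - 1 : ℤ) = k by ring] at this
    have hd : x k - x (k + 1) = q (k + 1) - q (k + 1 - m) := by
      rw [hq1]; abel
    have expand : ∀ a b : X, ‖b‖ ^ 2 = ‖a‖ ^ 2 - ‖a - b‖ ^ 2 - 2 * ⟪b, a - b⟫ := by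
      intro a b
      rw [norm_sub_sq_real, inner_sub_right, real_inner_comm b a,
        real_inner_self_eq_norm_sq]
      ring
    have hid := expand (x k - z) (x (k + 1) - z)
    rw [show (x k - z) - (x (k + 1) - z) = x k - x (k + 1) by abel, hd,
      inner_sub_right] at hid
    have h1 : (0 : ℝ) ≤ ‖q (k + 1) - q (k + 1 - m)‖ ^ 2 := by positivity
    have h2 : ⟪x (k + 1) - z, q (k + 1 - m)⟫ ≤ ⟪x (k + 1 - m) - z, q (k + 1 - m)⟫ := by
      have := hcross k hk
      have heq : ⟪x (k + 1 - m) - z, q (k + 1 - m)⟫ - ⟪x (k + 1) - z, q (k + 1 - m)⟫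
          = ⟪x (k + 1 - m) - x (k + 1), q (k + 1 - m)⟫ := by
        rw [← inner_sub_left]
        congr 1
        abel
      linarith
    linarith
  -- sum telescoping
  have hsum : ∀ k : ℤ,
      (∑ t ∈ Finset.Icc (k + 1 - m + 1) (k + 1), ⟪x t - z, q t⟫)
        = (∑ t ∈ Finset.Icc (k - m + 1) k, ⟪x t - z, q t⟫)
          + ⟪x (k + 1) - z, q (k + 1)⟫ - ⟪x (k + 1 - m) - z, q (k + 1 - m)⟫ := by
    intro k
    have e1 : Finset.Icc (k + 1 - (m : ℤ) + 1) (k + 1)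
        = insert (k + 1) (Finset.Icc (k - m + 2) k) := by
      ext t; simp only [Finset.mem_Icc, Finset.mem_insert]; omega
    have e2 : Finset.Icc (k - (m : ℤ) + 1) k
        = insert (k + 1 - m) (Finset.Icc (k - m + 2) k) := by
      ext t; simp only [Finset.mem_Icc, Finset.mem_insert]; omega
    rw [e1, e2, Finset.sum_insert (by simp only [Finset.mem_Icc]; omega),
      Finset.sum_insert (by simp only [Finset.mem_Icc]; omega)]
    ring
  -- induction
  have H : ∀ i : ℤ, n ≤ i →
      ‖x i - z‖ ^ 2 + 2 * ∑ t ∈ Finset.Icc (i - m + 1) i, ⟪x t - z, q t⟫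
        ≤ ‖x n - z‖ ^ 2 + 2 * ∑ t ∈ Finset.Icc (n - m + 1) n, ⟪x t - z, q t⟫ := by
    intro j
    refine Int.le_induction (motive := fun j _ =>
      ‖x j - z‖ ^ 2 + 2 * ∑ t ∈ Finset.Icc (j - m + 1) j, ⟪x t - z, q t⟫
        ≤ ‖x n - z‖ ^ 2 + 2 * ∑ t ∈ Finset.Icc (n - m + 1) n, ⟪x t - z, q t⟫)
      le_rfl ?_ j
    intro k hk IH
    have hk0 : (0 : ℤ) ≤ k := le_trans hn hk
    have hkey := key k hk0
    have hs := hsum k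
    linarith
  linarith [H i hni]
end

section
/- For the Dykstra iteration, if p ∈ ⋂_{j=1}^m C_j and b ≥ ‖x_0 − p‖, then for all n: ‖x_n − p‖ ≤ b and ∑_{k=0}^n ‖x_k − x_{k+1}‖² ≤ b². -/
open scoped RealInnerProductSpace

lemma myIcc_top (a b : ℤ) (h : a ≤ b + 1) :
    Finset.Icc a (b+1) = insert (b+1) (Finset.Icc a b) := by
  ext k; simp only [Finset.mem_Icc, Finset.mem_insert]; omega

lemma myIcc_bot (a b : ℤ) (h : a ≤ b) :
    Finset.Icc a b = insert a (Finset.Icc (a+1) b) := by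
  ext k; simp only [Finset.mem_Icc, Finset.mem_insert]; omega

lemma proj_inner {X : Type*} [NormedAddCommGroup X] [InnerProductSpace ℝ X]
    {K : Set X} (hK : Convex ℝ K) {u v : X} (hv : v ∈ K)
    (hmin : ∀ w ∈ K, ‖u - v‖ ≤ ‖u - w‖) : ∀ w ∈ K, ⟪u - v, w - v⟫ ≤ 0 := by
  haveI : Nonempty K := ⟨⟨v, hv⟩⟩
  rw [← norm_eq_iInf_iff_real_inner_le_zero hK hv]
  apply le_antisymm
  · exact le_ciInf fun w => hmin w w.2
  · apply ciInf_le _ (⟨v, hv⟩ : K)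
    exact ⟨0, fun r hr => by obtain ⟨w, rfl⟩ := hr; exact norm_nonneg _⟩

theorem stmt_12
    (X : Type*) [NormedAddCommGroup X] [InnerProductSpace ℝ X]
    (m : ℕ) (hm : 2 ≤ m)
    (C : ℤ → Set X) (hCcl : ∀ n, IsClosed (C n)) (hCconv : ∀ n, Convex ℝ (C n))
    (hCne : (⋂ j ∈ Finset.Icc (1:ℤ) m, C j).Nonempty)
    (hCper : ∀ n : ℤ, C (n + m) = C n)
    (P : ℤ → X → X)
    (hP : ∀ j (y : X), P j y ∈ C j ∧ ∀ w ∈ C j, ‖y - P j y‖ ≤ ‖y - w‖)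
    (x q : ℤ → X) (hq0 : ∀ k : ℤ, k ≤ 0 → q k = 0)
    (hxdef : ∀ n : ℤ, 1 ≤ n → x n = P n (x (n - 1) + q (n - m)))
    (hqdef : ∀ n : ℤ, 1 ≤ n → q n = x (n - 1) + q (n - m) - x n)
    (p : X) (hp : ∀ j ∈ Finset.Icc (1:ℤ) m, p ∈ C j)
    (b : ℕ) (hb1 : 1 ≤ b) (hb : ‖x 0 - p‖ ≤ (b : ℝ))
    : ∀ n : ℤ, 0 ≤ n →
      ‖x n - p‖ ≤ (b : ℝ) ∧
      ∑ k ∈ Finset.Icc 0 n, ‖x k - x (k + 1)‖ ^ 2 ≤ (b : ℝ) ^ 2 := by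
  have hm' : (2:ℤ) ≤ (m:ℤ) := by exact_mod_cast hm
  have hm0 : (0:ℤ) < (m:ℤ) := by omega
  -- periodicity
  have hper : ∀ t : ℤ, ∀ n : ℤ, C (n + t * m) = C n := by
    intro t
    induction t using Int.induction_on with
    | zero => intro n; simp
    | succ t ih =>
        intro n
        rw [show n + ((t:ℤ)+1)*m = (n + t*m) + m from by ring, hCper, ih]
    | pred t ih =>
        intro n
        have h2 := hCper (n + (-(t:ℤ)-1)*m)
        rw [show n + (-(t:ℤ)-1)*m + (m:ℤ) = n + (-(t:ℤ))*m from by ring] at h2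
        exact h2.symm.trans (ih n)
  -- p belongs to every C k, k ≥ 1
  have hpC : ∀ k : ℤ, 1 ≤ k → p ∈ C k := by
    intro k hk
    set r : ℤ := (k-1) % m + 1 with hr
    have h1 : (0:ℤ) ≤ (k-1) % m := Int.emod_nonneg _ (by omega)
    have h2 : (k-1) % m < m := Int.emod_lt_of_pos _ hm0
    have hdiv : (m:ℤ) * ((k-1) / m) + (k-1) % m = k - 1 := Int.mul_ediv_add_emod _ _
    have harg : r + ((k-1)/m) * m = k := by
      rw [hr, mul_comm] at *
      linarith [hdiv]
    have hCk : C k = C r := by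
      have := hper ((k-1)/m) r
      rwa [harg] at this
    rw [hCk]
    exact hp r (Finset.mem_Icc.mpr ⟨by omega, by omega⟩)
  have hxC : ∀ n : ℤ, 1 ≤ n → x n ∈ C n := by
    intro n hn; rw [hxdef n hn]; exact (hP n _).1
  -- projection variational inequality in terms of q
  have hproj : ∀ n : ℤ, 1 ≤ n → ∀ w ∈ C n, ⟪q n, w - x n⟫ ≤ 0 := by
    intro n hn w hw
    have h1 := proj_inner (hCconv n) (hP n (x (n-1) + q (n-m))).1
      (hP n (x (n-1) + q (n-m))).2 w hw
    rw [hqdef n hn, hxdef n hn]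
    exact h1
  have hqinner : ∀ k : ℤ, 0 ≤ ⟪q k, x k - p⟫ := by
    intro k
    rcases le_or_gt k 0 with h | h
    · rw [hq0 k h]; simp
    · have h1 := hproj k h p (hpC k h)
      have h2 : ⟪q k, p - x k⟫ = -⟪q k, x k - p⟫ := by
        rw [← neg_sub, inner_neg_right]
      linarith
  -- the key inequality
  have key : ∀ n : ℤ, 0 ≤ n →
      ‖x n - p‖^2 + 2 * (∑ k ∈ Finset.Icc (n+1-m) n, ⟪q k, x k - p⟫)
        + ∑ k ∈ Finset.Icc 1 n, ‖x (k-1) - x k‖^2 ≤ ‖x 0 - p‖^2 := by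
    have main : ∀ N : ℕ,
        ‖x (N:ℤ) - p‖^2 + 2 * (∑ k ∈ Finset.Icc ((N:ℤ)+1-m) (N:ℤ), ⟪q k, x k - p⟫)
          + ∑ k ∈ Finset.Icc 1 (N:ℤ), ‖x (k-1) - x k‖^2 ≤ ‖x 0 - p‖^2 := by
      intro N
      induction N with
      | zero =>
        rw [show ((0:ℕ):ℤ) = (0:ℤ) from rfl]
        have hT : ∑ k ∈ Finset.Icc (0+1-(m:ℤ)) 0, ⟪q k, x k - p⟫ = 0 :=
          Finset.sum_eq_zero fun k hk => by
            rw [hq0 k (Finset.mem_Icc.mp hk).2]; exact inner_zero_left _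
        have hE : Finset.Icc (1:ℤ) 0 = ∅ := Finset.Icc_eq_empty (by omega)
        rw [hT, hE]
        simp
      | succ N IH =>
        rw [show ((N+1:ℕ):ℤ) = (N:ℤ)+1 from by push_cast; ring]
        set n : ℤ := (N:ℤ) with hnN
        have ih := IH
        have hq1 : q (n+1) = x n + q (n+1-m) - x (n+1) := by
          have h := hqdef (n+1) (by omega)
          rwa [show (n:ℤ)+1-1 = n from by ring] at h
        have hid : ‖x n - p‖^2
            = ‖x n - x (n+1)‖^2 + 2*⟪x n - x (n+1), x (n+1) - p⟫ + ‖x (n+1) - p‖^2 := by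
          have h := norm_add_sq_real (x n - x (n+1)) (x (n+1) - p)
          rwa [show x n - x (n+1) + (x (n+1) - p) = x n - p from by abel] at h
        have hcross : ⟪x n - x (n+1), x (n+1) - p⟫
            = ⟪q (n+1), x (n+1) - p⟫ - ⟪q (n+1-m), x (n+1) - p⟫ := by
          rw [show x n - x (n+1) = q (n+1) - q (n+1-m) from by rw [hq1]; abel,
            inner_sub_left]
        have hs1 : ∑ k ∈ Finset.Icc 1 (n+1), ‖x (k-1) - x k‖^2
            = ∑ k ∈ Finset.Icc 1 n, ‖x (k-1) - x k‖^2 + ‖x n - x (n+1)‖^2 := by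
          rw [myIcc_top 1 n (by omega),
            Finset.sum_insert (by simp only [Finset.mem_Icc]; omega),
            show (n:ℤ)+1-1 = n from by ring]
          ring
        have hs2 : ∑ k ∈ Finset.Icc (n+1+1-(m:ℤ)) (n+1), ⟪q k, x k - p⟫
            = ∑ k ∈ Finset.Icc (n+2-(m:ℤ)) n, ⟪q k, x k - p⟫ + ⟪q (n+1), x (n+1) - p⟫ := by
          rw [show (n:ℤ)+1+1-m = n+2-m from by ring, myIcc_top (n+2-m) n (by omega),
            Finset.sum_insert (by simp only [Finset.mem_Icc]; omega)]
          ring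
        have hs3 : ∑ k ∈ Finset.Icc (n+1-(m:ℤ)) n, ⟪q k, x k - p⟫
            = ⟪q (n+1-m), x (n+1-m) - p⟫ + ∑ k ∈ Finset.Icc (n+2-(m:ℤ)) n, ⟪q k, x k - p⟫ := by
          rw [myIcc_bot (n+1-m) n (by omega),
            Finset.sum_insert (by simp only [Finset.mem_Icc]; omega),
            show (n:ℤ)+1-m+1 = n+2-m from by ring]
        have hneg : ⟪q (n+1-m), x (n+1) - x (n+1-m)⟫ ≤ 0 := by
          rcases le_or_gt ((n:ℤ)+1-m) 0 with h | h
          · rw [hq0 _ h]; simp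
          · have hxc : x (n+1) ∈ C (n+1) := hxC (n+1) (by omega)
            have hCeq : C (n+1) = C (n+1-m) := by
              have h2 := hCper (n+1-m)
              rwa [show (n:ℤ)+1-m+m = n+1 from by ring] at h2
            exact hproj (n+1-m) h (x (n+1)) (hCeq ▸ hxc)
        have hdec : ⟪q (n+1-m), x (n+1) - p⟫
            = ⟪q (n+1-m), x (n+1) - x (n+1-m)⟫ + ⟪q (n+1-m), x (n+1-m) - p⟫ := by
          rw [← inner_add_right]
          congr 1
          abel
        rw [hs1, hs2]
        rw [hs3] at ih
        linarith
    intro n hn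
    obtain ⟨N, rfl⟩ := Int.eq_ofNat_of_zero_le hn
    exact main N
  -- conclude
  intro n hn
  have hb0 : (0:ℝ) < (b:ℝ) := by exact_mod_cast hb1
  have hb2 : ‖x 0 - p‖^2 ≤ (b:ℝ)^2 := by nlinarith [norm_nonneg (x 0 - p)]
  constructor
  · have hk := key n hn
    have hT : 0 ≤ ∑ k ∈ Finset.Icc (n+1-(m:ℤ)) n, ⟪q k, x k - p⟫ :=
      Finset.sum_nonneg fun k _ => hqinner k
    have hE : 0 ≤ ∑ k ∈ Finset.Icc (1:ℤ) n, ‖x (k-1) - x k‖^2 :=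
      Finset.sum_nonneg fun k _ => sq_nonneg _
    nlinarith [norm_nonneg (x n - p)]
  · have hk := key (n+1) (by omega)
    have hT : 0 ≤ ∑ k ∈ Finset.Icc (n+1+1-(m:ℤ)) (n+1), ⟪q k, x k - p⟫ :=
      Finset.sum_nonneg fun k _ => hqinner k
    have hEq : ∑ k ∈ Finset.Icc (1:ℤ) (n+1), ‖x (k-1) - x k‖^2
        = ∑ k ∈ Finset.Icc 0 n, ‖x k - x (k+1)‖^2 := by
      rw [show Finset.Icc (1:ℤ) (n+1) = (Finset.Icc (0:ℤ) n).map (addRightEmbedding 1) from by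
          rw [Finset.map_add_right_Icc]; norm_num,
        Finset.sum_map]
      apply Finset.sum_congr rfl
      intro k _
      simp only [addRightEmbedding_apply]
      rw [show (k:ℤ)+1-1 = k from by ring]
    rw [← hEq]
    nlinarith [sq_nonneg ‖x (n+1) - p‖]
end

section
/- For the Dykstra iteration with b ≥ ‖x_0 − p‖ for some common point p: ‖x_n − x_{n+1}‖ → 0, with rate of metastability: for all ε > 0 and f : ℕ → ℕ there exists n ≤ Ψ(b², ε², f) with ‖x_k − x_{k+1}‖ ≤ ε for all k ∈ [n, n+f(n)], where Ψ is the metastability rate for summable sequences (Ψ(B,ε,f) := f̌^{⌊B/ε⌋}(0), f̌(p) = p+f(p)+1). -/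
open scoped RealInnerProductSpace

lemma proj_char' {X : Type*} [NormedAddCommGroup X] [InnerProductSpace ℝ X]
    {K : Set X} (hK : Convex ℝ K) {y v : X} (hv : v ∈ K)
    (hmin : ∀ w ∈ K, ‖y - v‖ ≤ ‖y - w‖) : ∀ w ∈ K, ⟪y - v, w - v⟫ ≤ 0 := by
  haveI : Nonempty K := ⟨⟨v, hv⟩⟩
  have hbdd : BddBelow (Set.range fun w : K => ‖y - (w:X)‖) := by
    refine ⟨0, ?_⟩
    rintro _ ⟨w, rfl⟩
    exact norm_nonneg _
  have heq : ‖y - v‖ = ⨅ w : K, ‖y - w‖ := by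
    refine le_antisymm (le_ciInf fun w => hmin w w.2) ?_
    exact ciInf_le hbdd ⟨v, hv⟩
  exact (norm_eq_iInf_iff_real_inner_le_zero hK hv).1 heq

lemma meta_lemma' (c : ℕ → ℝ) (hc : ∀ k, 0 ≤ c k) (B : ℝ)
    (hB : ∀ n, ∑ k ∈ Finset.range n, c k ≤ B) (δ : ℝ) (hδ : 0 < δ) (f : ℕ → ℕ) :
    ∃ n ≤ (fun p => p + f p + 1)^[⌊B/δ⌋₊] 0, ∀ k ∈ Finset.Icc n (n + f n), c k ≤ δ := by
  by_contra hcon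
  push_neg at hcon
  set g : ℕ → ℕ := fun p => p + f p + 1 with hg
  set M := ⌊B/δ⌋₊ with hM
  set nn : ℕ → ℕ := fun i => g^[i] 0 with hnn
  have hsucc : ∀ i, nn (i+1) = nn i + f (nn i) + 1 := by
    intro i
    simp only [hnn, Function.iterate_succ_apply']
    rfl
  have hmono : Monotone nn := monotone_nat_of_le_succ fun i => by rw [hsucc]; omega
  have hchoice : ∀ i : ℕ, ∃ kk : ℕ, i ≤ M → (nn i ≤ kk ∧ kk ≤ nn i + f (nn i) ∧ δ < c kk) := by
    intro i
    by_cases hi : i ≤ M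
    · obtain ⟨k, hk1, hk2⟩ := hcon (nn i) (hmono hi)
      rw [Finset.mem_Icc] at hk1
      exact ⟨k, fun _ => ⟨hk1.1, hk1.2, hk2⟩⟩
    · exact ⟨0, fun h => absurd h hi⟩
  choose kk hkk using hchoice
  have hkmono : ∀ i j, i < j → j ≤ M → kk i < kk j := by
    intro i j hij hj
    have h1 := hkk i (le_trans (le_of_lt hij) hj)
    have h2 := hkk j hj
    have h3 : nn (i+1) ≤ nn j := hmono hij
    rw [hsucc] at h3
    omega
  have hsub : (Finset.range (M+1)).image kk ⊆ Finset.range (kk M + 1) := by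
    intro y hy
    simp only [Finset.mem_image, Finset.mem_range] at hy ⊢
    obtain ⟨i, hi, rfl⟩ := hy
    rcases eq_or_lt_of_le (Nat.lt_succ_iff.1 hi) with h | h
    · subst h; omega
    · exact Nat.lt_succ_of_lt (hkmono i M h le_rfl)
  have h1 : ∑ i ∈ Finset.range (M+1), c (kk i)
      = ∑ y ∈ (Finset.range (M+1)).image kk, c y := by
    refine (Finset.sum_image ?_).symm
    intro i hi j hj hij
    by_contra hne
    rcases lt_or_gt_of_ne hne with h | h
    · exact absurd hij (ne_of_lt (hkmono i j h (Nat.lt_succ_iff.1 (Finset.mem_range.1 hj))))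
    · exact absurd hij.symm (ne_of_lt (hkmono j i h (Nat.lt_succ_iff.1 (Finset.mem_range.1 hi))))
  have h2 : ∑ y ∈ (Finset.range (M+1)).image kk, c y ≤ ∑ y ∈ Finset.range (kk M + 1), c y :=
    Finset.sum_le_sum_of_subset_of_nonneg hsub (fun i _ _ => hc i)
  have h3 : ((M:ℝ)+1) * δ < ∑ i ∈ Finset.range (M+1), c (kk i) := by
    have hlt : ∑ _i ∈ Finset.range (M+1), δ < ∑ i ∈ Finset.range (M+1), c (kk i) :=
      Finset.sum_lt_sum_of_nonempty ⟨0, by simp⟩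
        (fun i hi => (hkk i (Nat.lt_succ_iff.1 (Finset.mem_range.1 hi))).2.2)
    simpa [Finset.sum_const, mul_comm] using hlt
  have h4 : B < ((M:ℝ)+1) * δ := by
    have hf := Nat.lt_floor_add_one (B/δ)
    rw [div_lt_iff₀ hδ] at hf
    rw [hM]
    push_cast
    linarith
  have h5 := hB (kk M + 1)
  linarith [h1 ▸ h3]

theorem stmt_14
    (X : Type*) [NormedAddCommGroup X] [InnerProductSpace ℝ X]
    (m : ℕ) (hm : 2 ≤ m)
    (C : ℤ → Set X) (hCcl : ∀ n, IsClosed (C n)) (hCconv : ∀ n, Convex ℝ (C n))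
    (hCne : (⋂ j ∈ Finset.Icc (1:ℤ) m, C j).Nonempty)
    (hCper : ∀ n : ℤ, C (n + m) = C n)
    (P : ℤ → X → X)
    (hP : ∀ j (y : X), P j y ∈ C j ∧ ∀ w ∈ C j, ‖y - P j y‖ ≤ ‖y - w‖)
    (x q : ℤ → X) (hq0 : ∀ k : ℤ, k ≤ 0 → q k = 0)
    (hxdef : ∀ n : ℤ, 1 ≤ n → x n = P n (x (n - 1) + q (n - m)))
    (hqdef : ∀ n : ℤ, 1 ≤ n → q n = x (n - 1) + q (n - m) - x n)
    (p : X) (hp : ∀ j ∈ Finset.Icc (1:ℤ) m, p ∈ C j)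
    (b : ℕ) (hb1 : 1 ≤ b) (hb : ‖x 0 - p‖ ≤ (b : ℝ))
    : Filter.Tendsto (fun n : ℕ => ‖x (n : ℤ) - x ((n : ℤ) + 1)‖) Filter.atTop (nhds 0) ∧
      ∀ ε > (0:ℝ), ∀ f : ℕ → ℕ,
        ∃ n ≤ (fun p => p + f p + 1)^[⌊((b : ℝ) ^ 2) / ε ^ 2⌋₊] 0,
          ∀ k ∈ Finset.Icc n (n + f n), ‖x (k : ℤ) - x ((k : ℤ) + 1)‖ ≤ ε := by
  have hm2 : (2:ℤ) ≤ (m:ℤ) := by exact_mod_cast hm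
  -- basic facts
  have hxm : ∀ k : ℤ, 1 ≤ k → x k ∈ C k := by
    intro k hk; rw [hxdef k hk]; exact (hP k _).1
  have hqproj : ∀ k : ℤ, 1 ≤ k → ∀ w ∈ C k, ⟪q k, w - x k⟫ ≤ 0 := by
    intro k hk w hw
    set y := x (k-1) + q (k-m) with hy
    have hx : x k = P k y := hxdef k hk
    have h1 : x k ∈ C k := by rw [hx]; exact (hP k y).1
    have h2 : ∀ w ∈ C k, ‖y - x k‖ ≤ ‖y - w‖ := by
      intro w hw; rw [hx]; exact (hP k y).2 w hw
    have hpc := proj_char' (hCconv k) h1 h2 w hw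
    rw [hqdef k hk]
    exact hpc
  -- periodicity
  have hCadd : ∀ (t : ℕ) (n : ℤ), C (n + (t:ℤ) * m) = C n := by
    intro t
    induction t with
    | zero => simp
    | succ t ih =>
        intro n
        have he : n + ((t:ℤ)+1) * m = (n + m) + (t:ℤ) * m := by ring
        push_cast
        rw [he, ih (n + m), hCper n]
  have hpC : ∀ k : ℤ, 1 ≤ k → p ∈ C k := by
    intro k hk
    have hm0 : (0:ℤ) < m := by omega
    set r : ℤ := (k-1) % m + 1 with hr
    have hmod := Int.emod_nonneg (k-1) (by omega : (m:ℤ) ≠ 0)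
    have hmod2 := Int.emod_lt_of_pos (k-1) hm0
    set t : ℕ := ((k-1) / m).toNat with ht
    have htc : ((t:ℤ)) = (k-1)/m := Int.toNat_of_nonneg (Int.ediv_nonneg (by omega) (le_of_lt hm0))
    have hdm := Int.mul_ediv_add_emod (k-1) m
    have hkeq : k = r + (t:ℤ) * m := by
      rw [hr, htc]
      linarith [hdm, mul_comm (m:ℤ) ((k-1)/m)]
    have : C k = C r := by rw [hkeq, hCadd t r]
    rw [this]
    exact hp r (Finset.mem_Icc.2 ⟨by omega, by omega⟩)
  have hqx : ∀ k : ℤ, 1 ≤ k → 0 ≤ ⟪q k, x k - p⟫ := by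
    intro k hk
    have h := hqproj k hk p (hpC k hk)
    rw [inner_sub_right] at h ⊢
    linarith
  have hcross : ∀ k : ℤ, 1 ≤ k → ⟪q k, x (k + m) - x k⟫ ≤ 0 := by
    intro k hk
    refine hqproj k hk _ ?_
    rw [← hCper k]
    exact hxm (k+m) (by omega)
  have hdiff : ∀ k : ℤ, 1 ≤ k → x (k-1) - x k = q k - q (k-m) := by
    intro k hk
    rw [hqdef k hk]
    abel
  -- main sum bound
  have key : ∀ n : ℕ, ∑ k ∈ Finset.range n, ‖x (k:ℤ) - x ((k:ℤ)+1)‖^2 ≤ (b:ℝ)^2 := by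
    intro n
    set T : ℕ → ℝ := fun k => ⟪q ((k:ℤ)+1), x ((k:ℤ)+1) - p⟫ with hT
    set A : ℕ → ℝ := fun k => ⟪q ((k:ℤ)+1-m), x ((k:ℤ)+1) - p⟫ with hA
    have hTnn : ∀ k : ℕ, 0 ≤ T k := fun k => hqx _ (by omega)
    have hstep : ∀ k : ℕ, ‖x (k:ℤ) - p‖^2 - ‖x ((k:ℤ)+1) - p‖^2
        = ‖x (k:ℤ) - x ((k:ℤ)+1)‖^2 + 2 * (T k - A k) := by
      intro k
      have hd : x (k:ℤ) - x ((k:ℤ)+1) = q ((k:ℤ)+1) - q ((k:ℤ)+1-m) := by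
        have := hdiff ((k:ℤ)+1) (by omega)
        simpa using this
      have hexp : ‖x (k:ℤ) - p‖^2 = ‖x (k:ℤ) - x ((k:ℤ)+1)‖^2
          + 2 * ⟪x (k:ℤ) - x ((k:ℤ)+1), x ((k:ℤ)+1) - p⟫ + ‖x ((k:ℤ)+1) - p‖^2 := by
        have := norm_add_sq_real (x (k:ℤ) - x ((k:ℤ)+1)) (x ((k:ℤ)+1) - p)
        rw [show x (k:ℤ) - x ((k:ℤ)+1) + (x ((k:ℤ)+1) - p) = x (k:ℤ) - p by abel] at this
        exact this
      have hin : ⟪x (k:ℤ) - x ((k:ℤ)+1), x ((k:ℤ)+1) - p⟫ = T k - A k := by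
        rw [hd, inner_sub_left]
      rw [hin] at hexp
      linarith
  -- telescoping
    have htel : ∑ k ∈ Finset.range n, (‖x (k:ℤ) - p‖^2 - ‖x ((k:ℤ)+1) - p‖^2)
        = ‖x (0:ℤ) - p‖^2 - ‖x (n:ℤ) - p‖^2 := by
      have h := Finset.sum_range_sub' (fun k : ℕ => ‖x (k:ℤ) - p‖^2) n
      have he : ∀ k : ℕ, (((k+1:ℕ)):ℤ) = (k:ℤ)+1 := fun k => by push_cast; ring
      simp only [he] at h
      exact h
    have hsum : ∑ k ∈ Finset.range n, ‖x (k:ℤ) - x ((k:ℤ)+1)‖^2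
        = ‖x (0:ℤ) - p‖^2 - ‖x (n:ℤ) - p‖^2
          - 2 * ∑ k ∈ Finset.range n, T k + 2 * ∑ k ∈ Finset.range n, A k := by
      have h1 : ∑ k ∈ Finset.range n, (‖x (k:ℤ) - p‖^2 - ‖x ((k:ℤ)+1) - p‖^2)
          = ∑ k ∈ Finset.range n, (‖x (k:ℤ) - x ((k:ℤ)+1)‖^2 + 2 * (T k - A k)) :=
        Finset.sum_congr rfl (fun k _ => hstep k)
      rw [htel] at h1
      rw [Finset.sum_add_distrib] at h1
      rw [← Finset.mul_sum, Finset.sum_sub_distrib] at h1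
      linarith
    -- A ≤ T sum
    have hAk : ∀ k : ℕ, A k ≤ (if k < m then 0 else T (k - m)) := by
      intro k
      by_cases hkm : k < m
      · rw [if_pos hkm, hA]
        simp only
        rw [hq0 ((k:ℤ)+1-m) (by omega)]
        simp
      · rw [if_neg hkm]
        have hkm' : m ≤ k := le_of_not_gt hkm
        have hc1 : ((k - m : ℕ) : ℤ) + 1 = (k:ℤ)+1-m := by omega
        have hc2 : ((k:ℤ)+1-m) + m = (k:ℤ)+1 := by ring
        have hcr := hcross ((k:ℤ)+1-m) (by omega)
        rw [hc2] at hcr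
        simp only [hA, hT, hc1]
        have hdec : x ((k:ℤ)+1) - p = (x ((k:ℤ)+1) - x ((k:ℤ)+1-m)) + (x ((k:ℤ)+1-m) - p) := by
          abel
        rw [hdec, inner_add_right]
        have : ⟪q ((k:ℤ)+1-m), x ((k:ℤ)+1) - x ((k:ℤ)+1-m)⟫ ≤ 0 := hcr
        linarith
    have hsumA : ∑ k ∈ Finset.range n, A k ≤ ∑ k ∈ Finset.range n, T k := by
      have step1 : ∑ k ∈ Finset.range n, A k
          ≤ ∑ k ∈ Finset.range n, (if k < m then 0 else T (k - m)) :=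
        Finset.sum_le_sum (fun k _ => hAk k)
      refine le_trans step1 ?_
      by_cases hnm : n ≤ m
      · have hz : ∑ k ∈ Finset.range n, (if k < m then (0:ℝ) else T (k - m)) = 0 := by
          apply Finset.sum_eq_zero
          intro k hk
          rw [Finset.mem_range] at hk
          rw [if_pos (by omega)]
        rw [hz]
        exact Finset.sum_nonneg (fun k _ => hTnn k)
      · push_neg at hnm
        have hmn : m ≤ n := le_of_lt hnm
        have hsplit : ∑ k ∈ Finset.range n, (if k < m then (0:ℝ) else T (k - m))
            = ∑ k ∈ Finset.Ico m n, (if k < m then (0:ℝ) else T (k - m)) := by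
          rw [Finset.range_eq_Ico, ← Finset.sum_Ico_consecutive _ (Nat.zero_le m) hmn]
          have : ∑ k ∈ Finset.Ico 0 m, (if k < m then (0:ℝ) else T (k - m)) = 0 := by
            apply Finset.sum_eq_zero
            intro k hk
            rw [Finset.mem_Ico] at hk
            rw [if_pos hk.2]
          rw [this, zero_add]
        rw [hsplit]
        have heq2 : ∑ k ∈ Finset.Ico m n, (if k < m then (0:ℝ) else T (k - m))
            = ∑ k ∈ Finset.Ico m n, T (k - m) := by
          apply Finset.sum_congr rfl
          intro k hk
          rw [Finset.mem_Ico] at hk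
          rw [if_neg (by omega)]
        rw [heq2, Finset.sum_Ico_eq_sum_range]
        have heq3 : ∑ i ∈ Finset.range (n - m), T (m + i - m) = ∑ i ∈ Finset.range (n - m), T i := by
          apply Finset.sum_congr rfl
          intro i _
          congr 1
          omega
        rw [heq3]
        exact Finset.sum_le_sum_of_subset_of_nonneg
          (Finset.range_subset_range.2 (Nat.sub_le n m)) (fun i _ _ => hTnn i)
    have hb2 : ‖x (0:ℤ) - p‖^2 ≤ (b:ℝ)^2 := by
      have := pow_le_pow_left₀ (norm_nonneg _) hb 2
      exact this
    have hxn : (0:ℝ) ≤ ‖x (n:ℤ) - p‖^2 := sq_nonneg _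
    rw [hsum]
    linarith
  -- conclusions
  set c : ℕ → ℝ := fun k => ‖x (k:ℤ) - x ((k:ℤ)+1)‖^2 with hcdef
  have hcnn : ∀ k, 0 ≤ c k := fun k => sq_nonneg _
  constructor
  · have hsummable : Summable c := summable_of_sum_range_le hcnn key
    have hc0 : Filter.Tendsto c Filter.atTop (nhds 0) := hsummable.tendsto_atTop_zero
    have heq : (fun n : ℕ => ‖x (n:ℤ) - x ((n:ℤ)+1)‖) = fun n => Real.sqrt (c n) := by
      funext n
      rw [hcdef]
      exact (Real.sqrt_sq (norm_nonneg _)).symm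
    rw [heq]
    have := (Real.continuous_sqrt.tendsto 0).comp hc0
    simpa [Function.comp_def] using this
  · intro ε hε f
    obtain ⟨n, hn, hk⟩ := meta_lemma' c hcnn ((b:ℝ)^2) key (ε^2) (by positivity) f
    refine ⟨n, hn, fun k hk' => ?_⟩
    have h2 : ‖x (k:ℤ) - x ((k:ℤ)+1)‖^2 ≤ ε^2 := hk k hk'
    nlinarith [norm_nonneg (x (k:ℤ) - x ((k:ℤ)+1))]
end

section
/- For the Dykstra iteration with b ≥ ‖x_0 − p‖, p a common point: for all ε > 0 and n ∈ ℕ with n ≥ 1, if ‖x_0 − P_j(x_0)‖ ≤ ε²/(4bn) for all j ∈ {1,…,m}, then ‖x_n − x_0‖ ≤ ε. -/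
open scoped RealInnerProductSpace

-- sum over consecutive Ioc intervals in ℤ
lemma dyk_sum_Ioc_consec (f : ℤ → ℝ) {a b c : ℤ} (h1 : a ≤ b) (h2 : b ≤ c) :
    (∑ k ∈ Finset.Ioc a b, f k) + (∑ k ∈ Finset.Ioc b c, f k) = ∑ k ∈ Finset.Ioc a c, f k := by
  rw [← Finset.sum_union, Finset.Ioc_union_Ioc_eq_Ioc h1 h2]
  refine Finset.disjoint_left.2 fun k hk hk' => ?_
  simp only [Finset.mem_Ioc] at hk hk'
  omega

lemma dyk_Ioc_singleton (a : ℤ) : Finset.Ioc a (a + 1) = {a + 1} := by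
  ext k; simp only [Finset.mem_Ioc, Finset.mem_singleton]; omega

-- projection variational inequality
lemma dyk_proj_ineq {X : Type*} [NormedAddCommGroup X] [InnerProductSpace ℝ X]
    {K : Set X} (hconv : Convex ℝ K) {y v : X} (hv : v ∈ K)
    (hmin : ∀ w ∈ K, ‖y - v‖ ≤ ‖y - w‖) :
    ∀ w ∈ K, ⟪y - v, w - v⟫ ≤ 0 := by
  haveI : Nonempty K := ⟨⟨v, hv⟩⟩
  have heq : ‖y - v‖ = ⨅ w : K, ‖y - (w : X)‖ := by
    refine le_antisymm (le_ciInf fun w => hmin w w.2) ?_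
    have hbdd : BddBelow (Set.range fun w : K => ‖y - (w : X)‖) :=
      ⟨0, by rintro r ⟨w, rfl⟩; exact norm_nonneg _⟩
    exact ciInf_le hbdd ⟨v, hv⟩
  exact (norm_eq_iInf_iff_real_inner_le_zero hconv hv).mp heq

theorem stmt_16
    (X : Type*) [NormedAddCommGroup X] [InnerProductSpace ℝ X]
    (m : ℕ) (hm : 2 ≤ m)
    (C : ℤ → Set X) (hCcl : ∀ n, IsClosed (C n)) (hCconv : ∀ n, Convex ℝ (C n))
    (hCne : (⋂ j ∈ Finset.Icc (1:ℤ) m, C j).Nonempty)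
    (hCper : ∀ n : ℤ, C (n + m) = C n)
    (P : ℤ → X → X)
    (hP : ∀ j (y : X), P j y ∈ C j ∧ ∀ w ∈ C j, ‖y - P j y‖ ≤ ‖y - w‖)
    (x q : ℤ → X) (hq0 : ∀ k : ℤ, k ≤ 0 → q k = 0)
    (hxdef : ∀ n : ℤ, 1 ≤ n → x n = P n (x (n - 1) + q (n - m)))
    (hqdef : ∀ n : ℤ, 1 ≤ n → q n = x (n - 1) + q (n - m) - x n)
    (p : X) (hp : ∀ j ∈ Finset.Icc (1:ℤ) m, p ∈ C j)
    (b : ℕ) (hb1 : 1 ≤ b) (hb : ‖x 0 - p‖ ≤ (b : ℝ))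
    : ∀ ε > (0:ℝ), ∀ n : ℕ, 1 ≤ n →
        (∀ j ∈ Finset.Icc (1:ℤ) m, ‖x 0 - P j (x 0)‖ ≤ ε ^ 2 / (4 * b * n)) →
        ‖x (n : ℤ) - x 0‖ ≤ ε := by
  intro ε hε n hn hεP
  set δ : ℝ := ε ^ 2 / (4 * b * n) with hδdef
  have hδ0 : 0 ≤ δ := by positivity
  have hm0 : (0:ℤ) < (m:ℤ) := by exact_mod_cast Nat.lt_of_lt_of_le Nat.zero_lt_two hm
  -- variational inequality for q
  have hqinner : ∀ k : ℤ, 1 ≤ k → ∀ w ∈ C k, ⟪q k, w - x k⟫ ≤ 0 := by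
    intro k hk w hw
    rw [hqdef k hk, hxdef k hk]
    exact dyk_proj_ineq (hCconv k) (hP k (x (k-1) + q (k-m))).1
      (fun w hw => (hP k (x (k-1) + q (k-m))).2 w hw) w hw
  have hxmem : ∀ k : ℤ, 1 ≤ k → x k ∈ C k := by
    intro k hk; rw [hxdef k hk]; exact (hP k _).1
  -- full periodicity
  have hCperN : ∀ (k : ℤ) (t : ℕ), C (k + m * t) = C k := by
    intro k t
    induction t with
    | zero => simp
    | succ t ih =>
        have h : (k + (m:ℤ) * ((t+1 : ℕ) : ℤ)) = (k + (m:ℤ) * (t:ℤ)) + m := by push_cast; ring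
        rw [h, hCper, ih]
  have hrep : ∀ k : ℤ, 1 ≤ k → ∃ j ∈ Finset.Icc (1:ℤ) m, C k = C j := by
    intro k hk
    refine ⟨(k-1) % m + 1, ?_, ?_⟩
    · rw [Finset.mem_Icc]
      have h1 := Int.emod_nonneg (k-1) (ne_of_gt hm0)
      have h2 := Int.emod_lt_of_pos (k-1) hm0
      omega
    · have ht : (0:ℤ) ≤ (k-1) / m := Int.ediv_nonneg (by omega) (le_of_lt hm0)
      have hk2 : k = ((k-1) % m + 1) + m * (((k-1)/m).toNat : ℤ) := by
        rw [Int.toNat_of_nonneg ht]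
        have h3 := Int.mul_ediv_add_emod (k-1) (m:ℤ)
        linarith
      conv_lhs => rw [hk2]
      exact hCperN _ _
  have hpC : ∀ k : ℤ, 1 ≤ k → p ∈ C k := by
    intro k hk
    obtain ⟨j, hj, hCkj⟩ := hrep k hk
    rw [hCkj]; exact hp j hj
  have hPle : ∀ k : ℤ, 1 ≤ k → ‖x 0 - P k (x 0)‖ ≤ δ := by
    intro k hk
    obtain ⟨j, hj, hCkj⟩ := hrep k hk
    have h1 : ‖x 0 - P k (x 0)‖ ≤ ‖x 0 - P j (x 0)‖ :=
      (hP k (x 0)).2 (P j (x 0)) (by rw [hCkj]; exact (hP j (x 0)).1)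
    exact h1.trans (hεP j hj)
  -- the main identity
  have key : ∀ z : X, ∀ N : ℕ, ‖z - x 0‖^2 = ‖z - x (N:ℤ)‖^2
      + (∑ k ∈ Finset.Ioc (0:ℤ) (N:ℤ), ‖x k - x (k-1)‖^2)
      + 2 * ∑ k ∈ Finset.Ioc (0:ℤ) (N:ℤ), (⟪z - x k, q (k - m)⟫ - ⟪z - x k, q k⟫) := by
    intro z N
    induction N with
    | zero => simp
    | succ N ih =>
        have hcast : ((N+1 : ℕ) : ℤ) = (N:ℤ) + 1 := by push_cast; ring
        have hd : x ((N:ℤ)+1) - x N = q ((N:ℤ)+1-m) - q ((N:ℤ)+1) := by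
          have h1 := hqdef ((N:ℤ)+1) (by omega)
          rw [show ((N:ℤ)+1-1) = (N:ℤ) by ring] at h1
          rw [h1]; abel
        have hstep : ‖z - x (N:ℤ)‖^2 = ‖z - x ((N:ℤ)+1)‖^2 + ‖x ((N:ℤ)+1) - x N‖^2
            + 2 * (⟪z - x ((N:ℤ)+1), q ((N:ℤ)+1-m)⟫ - ⟪z - x ((N:ℤ)+1), q ((N:ℤ)+1)⟫) := by
          have he : z - x (N:ℤ) = (z - x ((N:ℤ)+1)) + (x ((N:ℤ)+1) - x N) := by abel
          rw [he, norm_add_sq_real, hd, inner_sub_right]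
          ring
        rw [hcast]
        rw [← dyk_sum_Ioc_consec _ (by omega : (0:ℤ) ≤ (N:ℤ)) (by omega : (N:ℤ) ≤ (N:ℤ)+1),
            ← dyk_sum_Ioc_consec _ (by omega : (0:ℤ) ≤ (N:ℤ)) (by omega : (N:ℤ) ≤ (N:ℤ)+1),
            dyk_Ioc_singleton, Finset.sum_singleton, Finset.sum_singleton,
            show ((N:ℤ)+1-1) = (N:ℤ) by ring]
        rw [ih]
        linarith [hstep]
  -- shift and split for fixed z, giving the star inequality
  have star : ∀ z : X, ‖z - x (n:ℤ)‖^2 + (∑ k ∈ Finset.Ioc (0:ℤ) (n:ℤ), ‖x k - x (k-1)‖^2)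
      ≤ ‖z - x 0‖^2 + 2 * ∑ k ∈ Finset.Ioc ((n:ℤ)-m) (n:ℤ), ⟪z - x k, q k⟫ := by
    intro z
    have hsum1 : ∑ k ∈ Finset.Ioc (0:ℤ) (n:ℤ), ⟪z - x k, q (k - m)⟫
        = ∑ k ∈ Finset.Ioc (-(m:ℤ)) ((n:ℤ)-m), ⟪z - x (k+m), q k⟫ := by
      have hmap : Finset.Ioc (0:ℤ) (n:ℤ)
          = (Finset.Ioc (-(m:ℤ)) ((n:ℤ)-m)).map (addRightEmbedding (m:ℤ)) := by
        rw [Finset.map_add_right_Ioc]; congr 1 <;> ring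
      rw [hmap, Finset.sum_map]
      refine Finset.sum_congr rfl fun k _ => ?_
      simp only [addRightEmbedding_apply]
      rw [show (k + (m:ℤ) - m) = k by ring]
    have hsplitg : ∑ k ∈ Finset.Ioc (0:ℤ) (n:ℤ), ⟪z - x k, q k⟫
        = (∑ k ∈ Finset.Ioc (-(m:ℤ)) ((n:ℤ)-m), ⟪z - x k, q k⟫)
          + ∑ k ∈ Finset.Ioc ((n:ℤ)-m) (n:ℤ), ⟪z - x k, q k⟫ := by
      have h0 : ∑ k ∈ Finset.Ioc (-(m:ℤ)) (0:ℤ), ⟪z - x k, q k⟫ = 0 := by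
        refine Finset.sum_eq_zero fun k hk => ?_
        rw [Finset.mem_Ioc] at hk
        rw [hq0 k hk.2, inner_zero_right]
      have h1 := dyk_sum_Ioc_consec (fun k => ⟪z - x k, q k⟫)
        (by omega : -(m:ℤ) ≤ 0) (by omega : (0:ℤ) ≤ (n:ℤ))
      have h2 := dyk_sum_Ioc_consec (fun k => ⟪z - x k, q k⟫)
        (by omega : -(m:ℤ) ≤ (n:ℤ)-m) (by omega : (n:ℤ)-m ≤ (n:ℤ))
      linarith
    have hmid : 0 ≤ ∑ k ∈ Finset.Ioc (-(m:ℤ)) ((n:ℤ)-m),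
        (⟪z - x (k+m), q k⟫ - ⟪z - x k, q k⟫) := by
      refine Finset.sum_nonneg fun k _ => ?_
      have hdiff : ⟪z - x (k+m), q k⟫ - ⟪z - x k, q k⟫ = ⟪x k - x (k+m), q k⟫ := by
        rw [← inner_sub_left]; congr 1; abel
      rw [hdiff]
      rcases le_or_gt k 0 with hk | hk
      · rw [hq0 k hk, inner_zero_right]
      · have hmem : x (k+m) ∈ C k := by
          rw [← hCper k]; exact hxmem (k+m) (by omega)
        have := hqinner k hk (x (k+m)) hmem
        have hcomm : ⟪x k - x (k+m), q k⟫ = -⟪q k, x (k+m) - x k⟫ := by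
          rw [real_inner_comm, show x k - x (k+m) = -(x (k+m) - x k) by abel, inner_neg_right]
        rw [hcomm]; linarith
    have hkey := key z n
    have hsub : ∑ k ∈ Finset.Ioc (0:ℤ) (n:ℤ), (⟪z - x k, q (k - m)⟫ - ⟪z - x k, q k⟫)
        = (∑ k ∈ Finset.Ioc (-(m:ℤ)) ((n:ℤ)-m), (⟪z - x (k+m), q k⟫ - ⟪z - x k, q k⟫))
          - ∑ k ∈ Finset.Ioc ((n:ℤ)-m) (n:ℤ), ⟪z - x k, q k⟫ := by
      rw [Finset.sum_sub_distrib, Finset.sum_sub_distrib, hsum1, hsplitg]; ring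
    rw [hsub] at hkey
    linarith
  -- A ≤ b^2
  have hA : (∑ k ∈ Finset.Ioc (0:ℤ) (n:ℤ), ‖x k - x (k-1)‖^2) ≤ (b:ℝ)^2 := by
    have hstarp := star p
    have hbd : ∑ k ∈ Finset.Ioc ((n:ℤ)-m) (n:ℤ), ⟪p - x k, q k⟫ ≤ 0 := by
      refine Finset.sum_nonpos fun k _ => ?_
      rcases le_or_gt k 0 with hk | hk
      · rw [hq0 k hk, inner_zero_right]
      · have := hqinner k hk p (hpC k hk)
        rw [real_inner_comm]; exact this
    have hpb : ‖p - x 0‖^2 ≤ (b:ℝ)^2 := by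
      rw [norm_sub_rev]
      have := norm_nonneg (x 0 - p)
      nlinarith
    have hnn : (0:ℝ) ≤ ‖p - x (n:ℤ)‖^2 := sq_nonneg _
    nlinarith
  -- each step ≤ b, so sum of norms ≤ n*b
  have hD : (∑ k ∈ Finset.Ioc (0:ℤ) (n:ℤ), ‖x k - x (k-1)‖) ≤ (n:ℝ) * b := by
    have hcard : (Finset.Ioc (0:ℤ) (n:ℤ)).card = n := by
      rw [Int.card_Ioc]; simp
    have hbound : ∀ k ∈ Finset.Ioc (0:ℤ) (n:ℤ), ‖x k - x (k-1)‖ ≤ (b:ℝ) := by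
      intro k hk
      have h1 : ‖x k - x (k-1)‖^2 ≤ (∑ j ∈ Finset.Ioc (0:ℤ) (n:ℤ), ‖x j - x (j-1)‖^2) :=
        Finset.single_le_sum (f := fun j => ‖x j - x (j-1)‖^2) (fun j _ => sq_nonneg _) hk
      have h2 := norm_nonneg (x k - x (k-1))
      have h3 : (0:ℝ) ≤ b := Nat.cast_nonneg b
      nlinarith
    calc (∑ k ∈ Finset.Ioc (0:ℤ) (n:ℤ), ‖x k - x (k-1)‖)
        ≤ (Finset.Ioc (0:ℤ) (n:ℤ)).card • (b:ℝ) := Finset.sum_le_card_nsmul _ _ _ hbound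
      _ = (n:ℝ) * b := by rw [hcard]; simp [nsmul_eq_mul]
  -- sum of ‖q k‖ over the boundary window
  have hqsum : ∀ M : ℕ, (∑ k ∈ Finset.Ioc ((M:ℤ)-m) (M:ℤ), ‖q k‖)
      ≤ ∑ k ∈ Finset.Ioc (0:ℤ) (M:ℤ), ‖x k - x (k-1)‖ := by
    intro M
    induction M with
    | zero =>
        simp only [Nat.cast_zero]
        rw [Finset.Ioc_self, Finset.sum_empty]
        refine le_of_eq (Finset.sum_eq_zero fun k hk => ?_)
        rw [Finset.mem_Ioc] at hk
        rw [hq0 k (by omega), norm_zero]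
    | succ M ih =>
        have hcast : ((M+1 : ℕ) : ℤ) = (M:ℤ) + 1 := by push_cast; ring
        rw [hcast]
        have e1 : (∑ k ∈ Finset.Ioc ((M:ℤ)+1-m) ((M:ℤ)+1), ‖q k‖)
            = (∑ k ∈ Finset.Ioc ((M:ℤ)+1-m) (M:ℤ), ‖q k‖) + ‖q ((M:ℤ)+1)‖ := by
          rw [← dyk_sum_Ioc_consec _ (by omega : (M:ℤ)+1-m ≤ (M:ℤ)) (by omega : (M:ℤ) ≤ (M:ℤ)+1),
              dyk_Ioc_singleton, Finset.sum_singleton]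
        have e2 : (∑ k ∈ Finset.Ioc ((M:ℤ)-m) (M:ℤ), ‖q k‖)
            = ‖q ((M:ℤ)+1-m)‖ + ∑ k ∈ Finset.Ioc ((M:ℤ)+1-m) (M:ℤ), ‖q k‖ := by
          rw [← dyk_sum_Ioc_consec _ (by omega : (M:ℤ)-m ≤ (M:ℤ)+1-m) (by omega : (M:ℤ)+1-m ≤ (M:ℤ)),
              show ((M:ℤ)+1-m) = ((M:ℤ)-m)+1 by ring, dyk_Ioc_singleton, Finset.sum_singleton,
              show ((M:ℤ)-m)+1 = ((M:ℤ)+1-m) by ring]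
        have e4 : ‖q ((M:ℤ)+1)‖ ≤ ‖q ((M:ℤ)+1-m)‖ + ‖x ((M:ℤ)+1) - x M‖ := by
          have h1 := hqdef ((M:ℤ)+1) (by omega)
          rw [show ((M:ℤ)+1-1) = (M:ℤ) by ring] at h1
          calc ‖q ((M:ℤ)+1)‖ = ‖q ((M:ℤ)+1-m) + (x M - x ((M:ℤ)+1))‖ := by rw [h1]; congr 1; abel
            _ ≤ ‖q ((M:ℤ)+1-m)‖ + ‖x M - x ((M:ℤ)+1)‖ := norm_add_le _ _
            _ = ‖q ((M:ℤ)+1-m)‖ + ‖x ((M:ℤ)+1) - x M‖ := by rw [norm_sub_rev (x M)]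
        have e5 : (∑ k ∈ Finset.Ioc (0:ℤ) ((M:ℤ)+1), ‖x k - x (k-1)‖)
            = (∑ k ∈ Finset.Ioc (0:ℤ) (M:ℤ), ‖x k - x (k-1)‖) + ‖x ((M:ℤ)+1) - x M‖ := by
          rw [← dyk_sum_Ioc_consec _ (by omega : (0:ℤ) ≤ (M:ℤ)) (by omega : (M:ℤ) ≤ (M:ℤ)+1),
              dyk_Ioc_singleton, Finset.sum_singleton, show ((M:ℤ)+1-1) = (M:ℤ) by ring]
        have hqn : (0:ℝ) ≤ ‖q ((M:ℤ)+1-m)‖ := norm_nonneg _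
        linarith
  have hqs : (∑ k ∈ Finset.Ioc ((n:ℤ)-m) (n:ℤ), ‖q k‖) ≤ (n:ℝ) * b := (hqsum n).trans hD
  -- final bound
  have hfin : ‖x 0 - x (n:ℤ)‖^2 ≤ ε^2 / 2 := by
    have hstar0 := star (x 0)
    have hA0 : (0:ℝ) ≤ ∑ k ∈ Finset.Ioc (0:ℤ) (n:ℤ), ‖x k - x (k-1)‖^2 :=
      Finset.sum_nonneg fun k _ => sq_nonneg _
    have hterm : ∀ k ∈ Finset.Ioc ((n:ℤ)-m) (n:ℤ), ⟪x 0 - x k, q k⟫ ≤ δ * ‖q k‖ := by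
      intro k _
      rcases le_or_gt k 0 with hk | hk
      · rw [hq0 k hk, inner_zero_right, norm_zero, mul_zero]
      · have hsplit : ⟪x 0 - x k, q k⟫
            = ⟪x 0 - P k (x 0), q k⟫ + ⟪P k (x 0) - x k, q k⟫ := by
          rw [← inner_add_left]; congr 1; abel
        have h2 : ⟪P k (x 0) - x k, q k⟫ ≤ 0 := by
          rw [real_inner_comm]; exact hqinner k hk (P k (x 0)) (hP k (x 0)).1
        have h1 : ⟪x 0 - P k (x 0), q k⟫ ≤ δ * ‖q k‖ := by
          calc ⟪x 0 - P k (x 0), q k⟫ ≤ ‖x 0 - P k (x 0)‖ * ‖q k‖ := real_inner_le_norm _ _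
            _ ≤ δ * ‖q k‖ := mul_le_mul_of_nonneg_right (hPle k hk) (norm_nonneg _)
        linarith
    have hsumle : (∑ k ∈ Finset.Ioc ((n:ℤ)-m) (n:ℤ), ⟪x 0 - x k, q k⟫)
        ≤ δ * ((n:ℝ) * b) := by
      calc (∑ k ∈ Finset.Ioc ((n:ℤ)-m) (n:ℤ), ⟪x 0 - x k, q k⟫)
          ≤ ∑ k ∈ Finset.Ioc ((n:ℤ)-m) (n:ℤ), δ * ‖q k‖ := Finset.sum_le_sum hterm
        _ = δ * ∑ k ∈ Finset.Ioc ((n:ℤ)-m) (n:ℤ), ‖q k‖ := by rw [Finset.mul_sum]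
        _ ≤ δ * ((n:ℝ) * b) := mul_le_mul_of_nonneg_left hqs hδ0
    have hself : ‖x 0 - x 0‖^2 = 0 := by simp
    have hδval : 2 * (δ * ((n:ℝ) * b)) = ε^2 / 2 := by
      rw [hδdef]
      have hb0 : (b:ℝ) ≠ 0 := by positivity
      have hn0 : (n:ℝ) ≠ 0 := by positivity
      field_simp
      ring
    nlinarith
  have hrev : ‖x (n:ℤ) - x 0‖ = ‖x 0 - x (n:ℤ)‖ := norm_sub_rev _ _
  rw [hrev]
  have h0 := norm_nonneg (x 0 - x (n:ℤ))
  nlinarith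
end

section
/- For the Dykstra iteration (no boundedness assumption needed): for all ε > 0 and n ≥ 1, if ‖x_0 − P_j(x_0)‖ ≤ ε/5^{n−1} for all j ∈ {1,…,m}, then ‖x_n − x_0‖ ≤ ε. Moreover one has the stronger induction statement: if ‖x_0 − P_j(x_0)‖ ≤ ε/5^{n−1} for all j, then for all n' ∈ [1,n], ‖x_{n'} − x_0‖ ≤ ε and ‖q_{n'−m}‖ ≤ ε. -/
open scoped RealInnerProductSpace

lemma dyk_var {X : Type*} [NormedAddCommGroup X] [InnerProductSpace ℝ X] {s : Set X}
    (hconv : Convex ℝ s) {y p : X} (hp : p ∈ s)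
    (hmin : ∀ w ∈ s, ‖y - p‖ ≤ ‖y - w‖) :
    ∀ w ∈ s, ⟪y - p, w - p⟫ ≤ 0 := by
  have hinf : ‖y - p‖ = ⨅ w : s, ‖y - w‖ := by
    haveI : Nonempty s := ⟨⟨p, hp⟩⟩
    refine le_antisymm (le_ciInf fun w => hmin w w.2) ?_
    refine ciInf_le ⟨0, ?_⟩ (⟨p, hp⟩ : s)
    rintro r ⟨w, rfl⟩
    exact norm_nonneg _
  exact (norm_eq_iInf_iff_real_inner_le_zero hconv hp).1 hinf

lemma dyk_nonexp {X : Type*} [NormedAddCommGroup X] [InnerProductSpace ℝ X] {s : Set X}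
    (hconv : Convex ℝ s) {y z p p' : X} (hp : p ∈ s) (hp' : p' ∈ s)
    (hmin : ∀ w ∈ s, ‖y - p‖ ≤ ‖y - w‖) (hmin' : ∀ w ∈ s, ‖z - p'‖ ≤ ‖z - w‖) :
    ‖p - p'‖ ≤ ‖y - z‖ := by
  have hA : ⟪y - p, p' - p⟫ ≤ 0 := dyk_var hconv hp hmin p' hp'
  have hB : ⟪z - p', p - p'⟫ ≤ 0 := dyk_var hconv hp' hmin' p hp
  have e1 : ⟪(y - z) - (p - p'), p - p'⟫ = ⟪y - z, p - p'⟫ - ⟪p - p', p - p'⟫ :=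
    inner_sub_left _ _ _
  have e2 : ((y - z) - (p - p')) = (y - p) - (z - p') := by abel
  have e3 : ⟪(y - p) - (z - p'), p - p'⟫ = ⟪y - p, p - p'⟫ - ⟪z - p', p - p'⟫ :=
    inner_sub_left _ _ _
  have e4 : ⟪y - p, p - p'⟫ = -⟪y - p, p' - p⟫ := by
    rw [show p - p' = -(p' - p) by abel, inner_neg_right]
  have h0 : ⟪p - p', p - p'⟫ = ‖p - p'‖ ^ 2 := real_inner_self_eq_norm_sq _
  have hsq : ‖p - p'‖ ^ 2 ≤ ⟪y - z, p - p'⟫ := by rw [e2] at e1; linarith [e1, e3]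
  have hcs : ⟪y - z, p - p'⟫ ≤ ‖y - z‖ * ‖p - p'‖ := real_inner_le_norm _ _
  nlinarith [norm_nonneg (p - p'), norm_nonneg (y - z)]

lemma dyk_uniq {X : Type*} [NormedAddCommGroup X] [InnerProductSpace ℝ X] {s : Set X}
    (hconv : Convex ℝ s) {y p p' : X} (hp : p ∈ s) (hp' : p' ∈ s)
    (hmin : ∀ w ∈ s, ‖y - p‖ ≤ ‖y - w‖) (hmin' : ∀ w ∈ s, ‖y - p'‖ ≤ ‖y - w‖) :
    p = p' := by
  have h := dyk_nonexp hconv hp hp' hmin hmin'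
  simp only [sub_self, norm_zero] at h
  exact sub_eq_zero.mp (norm_le_zero_iff.mp h)

lemma dyk_reduce {X : Type*} [NormedAddCommGroup X] [InnerProductSpace ℝ X]
    (m : ℕ) (hm : 2 ≤ m)
    (C : ℤ → Set X) (hCconv : ∀ n, Convex ℝ (C n))
    (hCper : ∀ n : ℤ, C (n + m) = C n)
    (P : ℤ → X → X)
    (hP : ∀ j (y : X), P j y ∈ C j ∧ ∀ w ∈ C j, ‖y - P j y‖ ≤ ‖y - w‖)
    (N : ℤ) (hN : 1 ≤ N) (y : X) :
    ∃ j₀ ∈ Finset.Icc (1:ℤ) m, P N y = P j₀ y := by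
  have hm2 : (2:ℤ) ≤ m := by exact_mod_cast hm
  set j₀ : ℤ := (N - 1) % m + 1 with hj₀
  have hm0 : (0:ℤ) < m := by omega
  have h1 : 0 ≤ (N - 1) % m := Int.emod_nonneg _ (by omega)
  have h2 : (N - 1) % m < m := Int.emod_lt_of_pos _ hm0
  have hdiv : 0 ≤ (N - 1) / m := Int.ediv_nonneg (by omega) (by omega)
  have hCk : ∀ (k : ℕ) (t : ℤ), C (t + k * m) = C t := by
    intro k
    induction k with
    | zero => simp
    | succ k ih =>
      intro t
      have : t + ((k:ℤ) + 1) * m = (t + k * m) + m := by ring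
      rw [show ((k+1 : ℕ) : ℤ) = (k:ℤ) + 1 by push_cast; ring, this, hCper, ih]
  obtain ⟨k, hk⟩ : ∃ k : ℕ, N = j₀ + k * m := by
    refine ⟨((N - 1) / m).toNat, ?_⟩
    rw [Int.toNat_of_nonneg hdiv]
    have h := Int.mul_ediv_add_emod (N - 1) (m:ℤ)
    rw [hj₀]
    linear_combination -h
  have hCeq : C N = C j₀ := by rw [hk]; exact hCk k j₀
  refine ⟨j₀, by simp only [Finset.mem_Icc]; omega, ?_⟩
  have hPN := hP N y
  have hPj := hP j₀ y
  refine dyk_uniq (hCconv j₀) ?_ hPj.1 ?_ hPj.2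
  · rw [← hCeq]; exact hPN.1
  · intro w hw
    exact hPN.2 w (by rw [hCeq]; exact hw)

theorem stmt_17
    (X : Type*) [NormedAddCommGroup X] [InnerProductSpace ℝ X]
    (m : ℕ) (hm : 2 ≤ m)
    (C : ℤ → Set X) (hCcl : ∀ n, IsClosed (C n)) (hCconv : ∀ n, Convex ℝ (C n))
    (hCne : (⋂ j ∈ Finset.Icc (1:ℤ) m, C j).Nonempty)
    (hCper : ∀ n : ℤ, C (n + m) = C n)
    (P : ℤ → X → X)
    (hP : ∀ j (y : X), P j y ∈ C j ∧ ∀ w ∈ C j, ‖y - P j y‖ ≤ ‖y - w‖)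
    (x q : ℤ → X) (hq0 : ∀ k : ℤ, k ≤ 0 → q k = 0)
    (hxdef : ∀ n : ℤ, 1 ≤ n → x n = P n (x (n - 1) + q (n - m)))
    (hqdef : ∀ n : ℤ, 1 ≤ n → q n = x (n - 1) + q (n - m) - x n)
    : ∀ ε > (0:ℝ), ∀ n : ℕ, 1 ≤ n →
        (∀ j ∈ Finset.Icc (1:ℤ) m, ‖x 0 - P j (x 0)‖ ≤ ε / 5 ^ (n - 1)) →
        ‖x (n : ℤ) - x 0‖ ≤ ε ∧
        ∀ n' ∈ Finset.Icc 1 n, ‖x (n' : ℤ) - x 0‖ ≤ ε ∧ ‖q ((n' : ℤ) - m)‖ ≤ ε := by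
  intro ε hε n hn h
  have key : ∀ n : ℕ, 1 ≤ n → ∀ ε : ℝ, 0 < ε →
      (∀ j ∈ Finset.Icc (1:ℤ) m, ‖x 0 - P j (x 0)‖ ≤ ε / 5 ^ (n - 1)) →
      ∀ n' ∈ Finset.Icc 1 n, ‖x (n' : ℤ) - x 0‖ ≤ ε ∧ ‖q ((n' : ℤ) - m)‖ ≤ ε := by
    intro n hn
    induction n, hn using Nat.le_induction with
    | base =>
      intro ε hε h n' hn'
      have hn1 : n' = 1 := by
        rw [Finset.mem_Icc] at hn'; omega
      subst hn1
      have hm2 : (2:ℤ) ≤ m := by exact_mod_cast hm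
      have hq1 : q (1 - m) = 0 := hq0 _ (by omega)
      have hx1 : x 1 = P 1 (x 0) := by
        rw [hxdef 1 le_rfl]
        norm_num [hq1]
      constructor
      · simp only [Nat.cast_one]
        rw [hx1, norm_sub_rev]
        have := h 1 (by rw [Finset.mem_Icc]; omega)
        simpa using this
      · push_cast
        rw [hq1, norm_zero]
        exact hε.le
    | succ n hn IH =>
      intro ε hε h
      have hm2 : (2:ℤ) ≤ m := by exact_mod_cast hm
      have hpow : (0:ℝ) < 5 ^ n := by positivity
      have h5n : (5:ℝ) ≤ 5 ^ n := by
        calc (5:ℝ) = 5 ^ 1 := by norm_num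
          _ ≤ 5 ^ n := pow_le_pow_right₀ (by norm_num) hn
      have hεn : ε / 5 ^ n ≤ ε / 5 := by
        rw [div_le_div_iff₀ hpow (by norm_num)]
        nlinarith
      have h' : ∀ j ∈ Finset.Icc (1:ℤ) m, ‖x 0 - P j (x 0)‖ ≤ ε / 5 ^ n := by
        intro j hj
        have := h j hj
        simpa using this
      have h5 : ∀ j ∈ Finset.Icc (1:ℤ) m, ‖x 0 - P j (x 0)‖ ≤ (ε / 5) / 5 ^ (n - 1) := by
        intro j hj
        have heq : (ε / 5) / 5 ^ (n - 1) = ε / 5 ^ n := by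
          rw [div_div, ← pow_succ']
          congr 2
          omega
        rw [heq]
        exact h' j hj
      have IH5 := IH (ε / 5) (by positivity) h5
      -- bound on projections for arbitrary N ≥ 1
      have hPb : ∀ N : ℤ, 1 ≤ N → ‖x 0 - P N (x 0)‖ ≤ ε / 5 ^ n := by
        intro N hN
        obtain ⟨j₀, hj₀, hPeq⟩ := dyk_reduce m hm C hCconv hCper P hP N hN (x 0)
        rw [hPeq]
        exact h' j₀ hj₀
      intro n' hn'
      rw [Finset.mem_Icc] at hn'
      by_cases hle : n' ≤ n
      · have := IH5 n' (by rw [Finset.mem_Icc]; omega)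
        constructor
        · linarith [this.1]
        · linarith [this.2]
      · have hn'' : n' = n + 1 := by omega
        subst hn''
        -- bound ‖q ((n+1 : ℤ) - m)‖ ≤ 3 ε / 5
        have hqb : ‖q (((n:ℤ) + 1) - m)‖ ≤ 3 * ε / 5 := by
          by_cases hc : ((n:ℤ) + 1) - m ≤ 0
          · rw [hq0 _ hc, norm_zero]
            positivity
          · push_neg at hc
            obtain ⟨k, hk⟩ : ∃ k : ℕ, (k:ℤ) = (n:ℤ) + 1 - m := ⟨((n:ℤ)+1-m).toNat, Int.toNat_of_nonneg (by omega)⟩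
            have hk1 : 1 ≤ k := by omega
            have hkn : k ≤ n := by omega
            have hIHk := IH5 k (by rw [Finset.mem_Icc]; omega)
            have hqk : q ((k:ℤ)) = x ((k:ℤ) - 1) + q ((k:ℤ) - m) - x (k:ℤ) := hqdef _ (by omega)
            have hxk1 : ‖x ((k:ℤ) - 1) - x 0‖ ≤ ε / 5 := by
              by_cases hk1' : k = 1
              · subst hk1'
                norm_num
                positivity
              · have := (IH5 (k-1) (by rw [Finset.mem_Icc]; omega)).1
                have hcast : ((k - 1 : ℕ) : ℤ) = (k:ℤ) - 1 := by omega
                rwa [hcast] at this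
            have hxk : ‖x (k:ℤ) - x 0‖ ≤ ε / 5 := hIHk.1
            have hqkm : ‖q ((k:ℤ) - m)‖ ≤ ε / 5 := hIHk.2
            have : (n:ℤ) + 1 - m = (k:ℤ) := hk.symm
            rw [this, hqk]
            have hre : x ((k:ℤ) - 1) + q ((k:ℤ) - m) - x (k:ℤ)
                = (x ((k:ℤ) - 1) - x 0) + q ((k:ℤ) - m) - (x (k:ℤ) - x 0) := by abel
            rw [hre]
            calc ‖(x ((k:ℤ) - 1) - x 0) + q ((k:ℤ) - m) - (x (k:ℤ) - x 0)‖
                ≤ ‖(x ((k:ℤ) - 1) - x 0) + q ((k:ℤ) - m)‖ + ‖x (k:ℤ) - x 0‖ := norm_sub_le _ _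
              _ ≤ ‖x ((k:ℤ) - 1) - x 0‖ + ‖q ((k:ℤ) - m)‖ + ‖x (k:ℤ) - x 0‖ := by
                  linarith [norm_add_le (x ((k:ℤ) - 1) - x 0) (q ((k:ℤ) - m))]
              _ ≤ 3 * ε / 5 := by linarith
        -- the recursion step
        have hxstep : x ((n:ℤ) + 1) = P ((n:ℤ) + 1) (x (n:ℤ) + q (((n:ℤ) + 1) - m)) := by
          have := hxdef ((n:ℤ) + 1) (by omega)
          simpa using this
        have hxn : ‖x (n:ℤ) - x 0‖ ≤ ε / 5 := (IH5 n (by rw [Finset.mem_Icc]; omega)).1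
        set v := x (n:ℤ) + q (((n:ℤ) + 1) - m) with hv
        have hvb : ‖v - x 0‖ ≤ ε / 5 + 3 * ε / 5 := by
          have : v - x 0 = (x (n:ℤ) - x 0) + q (((n:ℤ) + 1) - m) := by rw [hv]; abel
          rw [this]
          calc ‖(x (n:ℤ) - x 0) + q (((n:ℤ) + 1) - m)‖
              ≤ ‖x (n:ℤ) - x 0‖ + ‖q (((n:ℤ) + 1) - m)‖ := norm_add_le _ _
            _ ≤ ε / 5 + 3 * ε / 5 := by linarith
        have hPv := hP ((n:ℤ) + 1) v
        have hP0 := hP ((n:ℤ) + 1) (x 0)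
        have hnonexp : ‖P ((n:ℤ) + 1) v - P ((n:ℤ) + 1) (x 0)‖ ≤ ‖v - x 0‖ :=
          dyk_nonexp (hCconv _) hPv.1 hP0.1 hPv.2 hP0.2
        have hfinal : ‖x ((n:ℤ) + 1) - x 0‖ ≤ ε := by
          calc ‖x ((n:ℤ) + 1) - x 0‖
              = ‖(P ((n:ℤ) + 1) v - P ((n:ℤ) + 1) (x 0)) + (P ((n:ℤ) + 1) (x 0) - x 0)‖ := by
                rw [hxstep]; congr 1; abel
            _ ≤ ‖P ((n:ℤ) + 1) v - P ((n:ℤ) + 1) (x 0)‖ + ‖P ((n:ℤ) + 1) (x 0) - x 0‖ :=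
                norm_add_le _ _
            _ ≤ ‖v - x 0‖ + ε / 5 ^ n := by
                have := hPb ((n:ℤ) + 1) (by omega)
                rw [norm_sub_rev] at this
                linarith
            _ ≤ (ε / 5 + 3 * ε / 5) + ε / 5 := by linarith
            _ = ε := by ring
        constructor
        · have hcast : ((n + 1 : ℕ) : ℤ) = (n:ℤ) + 1 := by push_cast; ring
          rw [hcast]
          exact hfinal
        · have hcast : ((n + 1 : ℕ) : ℤ) - m = ((n:ℤ) + 1) - m := by push_cast; ring
          rw [hcast]
          calc ‖q (((n:ℤ) + 1) - m)‖ ≤ 3 * ε / 5 := hqb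
            _ ≤ ε := by linarith
  have hmem : n ∈ Finset.Icc 1 n := by rw [Finset.mem_Icc]; omega
  exact ⟨(key n hn ε hε h n hmem).1, key n hn ε hε h⟩
end

section
/- Suppose Dykstra's algorithm converges to P_C(x_0) for every starting point, with a rate of convergence uniform on bounded balls: whenever ‖x_0 − p‖ ≤ b, for all ε > 0 and n ≥ ρ(b,ε), ‖x_n − P_C(x_0)‖ ≤ ε. Then μ(b,ε) := max{ε²/(16b·ρ(b,ε/2)), ε/(2·5^{ρ(b,ε/2)})} is a modulus of regularity for C_1,…,C_m centred at p: for all x with ‖x − p‖ ≤ b, if ‖x − P_j(x)‖ ≤ μ(b,ε) for all j, then ‖x − P_C(x)‖ ≤ ε. -/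
open scoped RealInnerProductSpace

noncomputable def dyk {X : Type*} [NormedAddCommGroup X]
    (m : ℕ) (P : ℤ → X → X) (y : X) : ℕ → X × X
  | 0 => (y, 0)
  | n + 1 =>
    let a := (dyk m P y n).1 +
      (if h : 0 < m ∧ m < n + 1 then (dyk m P y (n + 1 - m)).2 else 0)
    (P ((n + 1 : ℕ) : ℤ) a, a - P ((n + 1 : ℕ) : ℤ) a)
  termination_by n => n
  decreasing_by
  · omega
  · omega

noncomputable def dx {X : Type*} [NormedAddCommGroup X]
    (m : ℕ) (P : ℤ → X → X) (y : X) (t : ℕ) : X := (dyk m P y t).1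

noncomputable def dq {X : Type*} [NormedAddCommGroup X]
    (m : ℕ) (P : ℤ → X → X) (y : X) (t : ℕ) : X := (dyk m P y t).2

noncomputable def dykA {X : Type*} [NormedAddCommGroup X]
    (m : ℕ) (P : ℤ → X → X) (y : X) (n : ℕ) : X :=
  dx m P y n + (if m < n + 1 then dq m P y (n + 1 - m) else 0)

section
variable {X : Type*} [NormedAddCommGroup X] {m : ℕ} {P : ℤ → X → X} {y : X}

lemma dx_zero : dx m P y 0 = y := by simp [dx, dyk]

lemma dq_zero : dq m P y 0 = 0 := by simp [dq, dyk]

lemma dyk_succ (hm : 0 < m) (n : ℕ) :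
    dyk m P y (n + 1) =
      (P ((n + 1 : ℕ) : ℤ) (dykA m P y n),
        dykA m P y n - P ((n + 1 : ℕ) : ℤ) (dykA m P y n)) := by
  rw [dyk]
  by_cases h : m < n + 1 <;> simp [dykA, dx, dq, h, hm]

lemma dx_succ (hm : 0 < m) (n : ℕ) :
    dx m P y (n + 1) = P ((n + 1 : ℕ) : ℤ) (dykA m P y n) := by
  rw [dx, dyk_succ hm]

lemma dq_succ (hm : 0 < m) (n : ℕ) :
    dq m P y (n + 1) = dykA m P y n - dx m P y (n + 1) := by
  rw [dq, dyk_succ hm, dx, dyk_succ hm]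

end

lemma dyk_drift {X : Type*} [NormedAddCommGroup X] [InnerProductSpace ℝ X]
    {m : ℕ} (hm : 0 < m) (C : ℤ → Set X)
    (hCconv : ∀ n, Convex ℝ (C n))
    (hCper : ∀ n : ℤ, C (n + m) = C n)
    (P : ℤ → X → X)
    (hP : ∀ j (z : X), P j z ∈ C j ∧ ∀ w ∈ C j, ‖z - P j z‖ ≤ ‖z - w‖)
    (y : X) (δ : ℝ) (hδ0 : 0 ≤ δ)
    (hdist : ∀ t : ℕ, ‖y - P ((t + 1 : ℕ) : ℤ) y‖ ≤ δ)
    (n : ℕ) :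
    ‖dx m P y n - y‖ ^ 2 ≤ (n : ℝ) * δ ^ 2 := by
  -- variational inequality for the projections
  have hvar : ∀ (j : ℤ) (a : X), ∀ w ∈ C j, ⟪a - P j a, w - P j a⟫ ≤ 0 := by
    intro j a
    have : Nonempty (C j) := ⟨⟨P j a, (hP j a).1⟩⟩
    have h1 : ‖a - P j a‖ = ⨅ w : C j, ‖a - ↑w‖ :=
      le_antisymm (le_ciInf fun w => (hP j a).2 w w.2)
        (ciInf_le (⟨0, by rintro z ⟨w, rfl⟩; exact norm_nonneg _⟩ : BddBelow (Set.range fun w : C j => ‖a - ↑w‖)) ⟨P j a, (hP j a).1⟩)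
    exact (norm_eq_iInf_iff_real_inner_le_zero (hCconv j) (hP j a).1).1 h1
  have hqvar : ∀ t : ℕ, ∀ w ∈ C ((t + 1 : ℕ) : ℤ),
      ⟪dq m P y (t + 1), w - dx m P y (t + 1)⟫ ≤ 0 := by
    intro t w hw
    rw [dq_succ hm, dx_succ hm]
    exact hvar _ _ w hw
  have hmem : ∀ t : ℕ, dx m P y (t + 1) ∈ C ((t + 1 : ℕ) : ℤ) := by
    intro t; rw [dx_succ hm]; exact (hP _ _).1
  have htrick : ∀ t : ℕ, m < t + 1 →
      ⟪dq m P y (t + 1 - m), dx m P y (t + 1) - dx m P y (t + 1 - m)⟫ ≤ 0 := by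
    intro t hmt
    obtain ⟨s, hs⟩ : ∃ s : ℕ, t + 1 - m = s + 1 := ⟨t - m, by omega⟩
    rw [hs]
    have hC : C ((t + 1 : ℕ) : ℤ) = C ((s + 1 : ℕ) : ℤ) := by
      have h := hCper ((s + 1 : ℕ) : ℤ)
      have he : ((s + 1 : ℕ) : ℤ) + m = ((t + 1 : ℕ) : ℤ) := by push_cast; omega
      rw [he] at h; exact h
    exact hqvar s (dx m P y (t + 1)) (hC ▸ hmem t)
  -- one-step energy inequality
  have hstep : ∀ t : ℕ,
      ‖dx m P y (t + 1) - y‖ ^ 2 ≤ ‖dx m P y t - y‖ ^ 2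
        - ‖dx m P y t - dx m P y (t + 1)‖ ^ 2
        + 2 * ⟪dq m P y (t + 1), y - dx m P y (t + 1)⟫
        - 2 * ⟪dq m P y (t + 1 - m), y - dx m P y (t + 1 - m)⟫ := by
    intro t
    set u := dx m P y (t + 1) - y with hu
    set Δ := dx m P y t - dx m P y (t + 1) with hΔ
    have hdecomp : dx m P y t - y = u + Δ := by rw [hu, hΔ]; abel
    have hexp : ‖dx m P y t - y‖ ^ 2 = ‖u‖ ^ 2 + 2 * ⟪u, Δ⟫ + ‖Δ‖ ^ 2 := by
      rw [hdecomp]; exact norm_add_sq_real u Δ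
    have hq : dq m P y (t + 1) = dykA m P y t - dx m P y (t + 1) := dq_succ hm t
    have hΔq : Δ = dq m P y (t + 1) - (if m < t + 1 then dq m P y (t + 1 - m) else 0) := by
      rw [hΔ, hq]; simp only [dykA]; abel
    have h1 : ⟪u, dq m P y (t + 1)⟫ = - ⟪dq m P y (t + 1), y - dx m P y (t + 1)⟫ := by
      rw [hu, real_inner_comm,
        show dx m P y (t + 1) - y = -(y - dx m P y (t + 1)) from by abel, inner_neg_right]
    have h2 : ⟪u, (if m < t + 1 then dq m P y (t + 1 - m) else 0)⟫
        ≤ - ⟪dq m P y (t + 1 - m), y - dx m P y (t + 1 - m)⟫ := by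
      by_cases hmt : m < t + 1
      · rw [if_pos hmt]
        have hsplit : u = (dx m P y (t + 1) - dx m P y (t + 1 - m))
            + (dx m P y (t + 1 - m) - y) := by rw [hu]; abel
        rw [hsplit, inner_add_left]
        have e1 : ⟪dx m P y (t + 1) - dx m P y (t + 1 - m), dq m P y (t + 1 - m)⟫ ≤ 0 := by
          rw [real_inner_comm]; exact htrick t hmt
        have e2 : ⟪dx m P y (t + 1 - m) - y, dq m P y (t + 1 - m)⟫
            = - ⟪dq m P y (t + 1 - m), y - dx m P y (t + 1 - m)⟫ := by
          rw [real_inner_comm,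
            show dx m P y (t + 1 - m) - y = -(y - dx m P y (t + 1 - m)) from by abel,
            inner_neg_right]
        linarith [e1, e2]
      · rw [if_neg hmt]
        have h0 : t + 1 - m = 0 := by omega
        rw [h0, dq_zero]
        simp
    have hfin : ⟪u, Δ⟫ ≥ - ⟪dq m P y (t + 1), y - dx m P y (t + 1)⟫
        + ⟪dq m P y (t + 1 - m), y - dx m P y (t + 1 - m)⟫ := by
      rw [hΔq, inner_sub_right, h1]
      linarith [h2]
    linarith [hexp, hfin]
  -- norm of the residuals
  have hqnorm : ∀ t : ℕ, ‖dq m P y (t + 1)‖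
      ≤ ‖dx m P y t - dx m P y (t + 1)‖ + ‖dq m P y (t + 1 - m)‖ := by
    intro t
    have hq : dq m P y (t + 1) = (dx m P y t - dx m P y (t + 1))
        + (if m < t + 1 then dq m P y (t + 1 - m) else 0) := by
      rw [dq_succ hm]; simp only [dykA]; abel
    by_cases hmt : m < t + 1
    · rw [hq, if_pos hmt]; exact norm_add_le _ _
    · have h0 : t + 1 - m = 0 := by omega
      rw [hq, if_neg hmt, h0, dq_zero]
      simp
  -- the inner products against the residuals are small
  have hcle : ∀ t : ℕ, ⟪dq m P y (t + 1), y - dx m P y (t + 1)⟫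
      ≤ δ * ‖dq m P y (t + 1)‖ := by
    intro t
    have hsplit : y - dx m P y (t + 1) = (y - P ((t + 1 : ℕ) : ℤ) y)
        + (P ((t + 1 : ℕ) : ℤ) y - dx m P y (t + 1)) := by abel
    rw [hsplit, inner_add_right]
    have h2 := hqvar t (P ((t + 1 : ℕ) : ℤ) y) (hP _ y).1
    have h3 := real_inner_le_norm (dq m P y (t + 1)) (y - P ((t + 1 : ℕ) : ℤ) y)
    have h4 := hdist t
    nlinarith [norm_nonneg (dq m P y (t + 1))]
  -- splitting sums over the trailing window
  have hsplitSum : ∀ f : ℕ → ℝ, f 0 = 0 → ∀ n : ℕ,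
      ∑ k ∈ Finset.Ioc (n - m) n, f k
        = f (n + 1 - m) + ∑ k ∈ Finset.Ioc (n + 1 - m) n, f k := by
    intro f hf0 n
    by_cases hmn : m ≤ n
    · have h1 : n - m ≤ n + 1 - m := by omega
      have h2 : n + 1 - m ≤ n := by omega
      rw [← Finset.sum_Ioc_consecutive f h1 h2]
      congr 1
      have h3 : n + 1 - m = (n - m) + 1 := by omega
      rw [h3, Finset.sum_Ioc_succ_top (le_refl (n - m)), Finset.Ioc_self,
        Finset.sum_empty, zero_add]
    · have e1 : n - m = 0 := by omega
      have e2 : n + 1 - m = 0 := by omega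
      rw [e1, e2, hf0, zero_add]
  -- accumulated energy inequality
  have henergy : ∀ n : ℕ,
      ‖dx m P y n - y‖ ^ 2 + ∑ j ∈ Finset.Ioc 0 n, ‖dx m P y (j - 1) - dx m P y j‖ ^ 2
        ≤ 2 * ∑ k ∈ Finset.Ioc (n - m) n, ⟪dq m P y k, y - dx m P y k⟫ := by
    intro n
    induction n with
    | zero => simp [dx_zero]
    | succ n ih =>
      rw [Finset.sum_Ioc_succ_top (Nat.zero_le n)]
      rw [Finset.sum_Ioc_succ_top (show n + 1 - m ≤ n by omega)]
      have hs := hsplitSum (fun k => ⟪dq m P y k, y - dx m P y k⟫)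
        (by simp [dq_zero]) n
      have h7 := hstep n
      simp only [Nat.add_sub_cancel] at *
      linarith [hs, h7, ih]
  -- accumulated residual bound
  have hqsum : ∀ n : ℕ,
      ∑ k ∈ Finset.Ioc (n - m) n, ‖dq m P y k‖
        ≤ ∑ j ∈ Finset.Ioc 0 n, ‖dx m P y (j - 1) - dx m P y j‖ := by
    intro n
    induction n with
    | zero => simp
    | succ n ih =>
      rw [Finset.sum_Ioc_succ_top (show n + 1 - m ≤ n by omega)]
      rw [Finset.sum_Ioc_succ_top (Nat.zero_le n)]
      have hs := hsplitSum (fun k => ‖dq m P y k‖) (by simp [dq_zero]) n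
      have h8 := hqnorm n
      simp only [Nat.add_sub_cancel] at *
      linarith [hs, h8, ih]
  -- Cauchy-Schwarz
  have hcs : (∑ j ∈ Finset.Ioc 0 n, ‖dx m P y (j - 1) - dx m P y j‖) ^ 2
      ≤ (n : ℝ) * ∑ j ∈ Finset.Ioc 0 n, ‖dx m P y (j - 1) - dx m P y j‖ ^ 2 := by
    have h := Finset.sum_mul_sq_le_sq_mul_sq (Finset.Ioc 0 n)
      (fun _ => (1 : ℝ)) (fun j => ‖dx m P y (j - 1) - dx m P y j‖)
    simpa [Nat.card_Ioc] using h
  have hcsum : ∑ k ∈ Finset.Ioc (n - m) n, ⟪dq m P y k, y - dx m P y k⟫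
      ≤ δ * ∑ k ∈ Finset.Ioc (n - m) n, ‖dq m P y k‖ := by
    rw [Finset.mul_sum]
    apply Finset.sum_le_sum
    intro k hk
    obtain ⟨s, rfl⟩ : ∃ s, k = s + 1 := ⟨k - 1, by
      have := (Finset.mem_Ioc.1 hk).1; omega⟩
    exact hcle s
  have hTnn : (0 : ℝ) ≤ ∑ j ∈ Finset.Ioc 0 n, ‖dx m P y (j - 1) - dx m P y j‖ :=
    Finset.sum_nonneg fun _ _ => norm_nonneg _
  have hqn := hqsum n
  have hE := henergy n
  rcases Nat.eq_zero_or_pos n with rfl | hn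
  · simp [dx_zero]
  · have hn0 : (0 : ℝ) < (n : ℝ) := by exact_mod_cast hn
    have e1 : ∑ k ∈ Finset.Ioc (n - m) n, ⟪dq m P y k, y - dx m P y k⟫
        ≤ δ * ∑ j ∈ Finset.Ioc 0 n, ‖dx m P y (j - 1) - dx m P y j‖ := by
      have := mul_le_mul_of_nonneg_left hqn hδ0
      linarith [hcsum]
    have e2 : ‖dx m P y n - y‖ ^ 2
          + ∑ j ∈ Finset.Ioc 0 n, ‖dx m P y (j - 1) - dx m P y j‖ ^ 2
        ≤ 2 * (δ * ∑ j ∈ Finset.Ioc 0 n, ‖dx m P y (j - 1) - dx m P y j‖) := by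
      linarith [hE, e1]
    have e3 := mul_le_mul_of_nonneg_left e2 (le_of_lt hn0)
    have key : (n : ℝ) * ‖dx m P y n - y‖ ^ 2 ≤ (n : ℝ) * ((n : ℝ) * δ ^ 2) := by
      nlinarith [e3, hcs,
        sq_nonneg ((∑ j ∈ Finset.Ioc 0 n, ‖dx m P y (j - 1) - dx m P y j‖) - (n : ℝ) * δ)]
    exact le_of_mul_le_mul_left key hn0

theorem stmt_18
    (X : Type*) [NormedAddCommGroup X] [InnerProductSpace ℝ X]
    (m : ℕ) (hm : 2 ≤ m)
    (C : ℤ → Set X) (hCcl : ∀ n, IsClosed (C n)) (hCconv : ∀ n, Convex ℝ (C n))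
    (hCper : ∀ n : ℤ, C (n + m) = C n)
    (P : ℤ → X → X)
    (hP : ∀ j (y : X), P j y ∈ C j ∧ ∀ w ∈ C j, ‖y - P j y‖ ≤ ‖y - w‖)
    (S : Set X) (hS : S = ⋂ j ∈ Finset.Icc (1:ℤ) m, C j)
    (p : X) (hp : p ∈ S)
    (PC : X → X) (hPC : ∀ y : X, PC y ∈ S ∧ ∀ w ∈ S, ‖y - PC y‖ ≤ ‖y - w‖)
    (ρ : ℕ → ℝ → ℕ)
    (hρ : ∀ x q : ℤ → X, (∀ k : ℤ, k ≤ 0 → q k = 0) →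
      (∀ n : ℤ, 1 ≤ n → x n = P n (x (n - 1) + q (n - m))) →
      (∀ n : ℤ, 1 ≤ n → q n = x (n - 1) + q (n - m) - x n) →
      ∀ b : ℕ, ‖x 0 - p‖ ≤ (b : ℝ) →
        ∀ ε > (0:ℝ), ∀ n : ℕ, ρ b ε ≤ n → ‖x (n : ℤ) - PC (x 0)‖ ≤ ε) :
    ∀ b : ℕ, 1 ≤ b → ∀ ε > (0:ℝ), ∀ y : X, ‖y - p‖ ≤ (b : ℝ) →
      (∀ j ∈ Finset.Icc (1:ℤ) m,
        ‖y - P j y‖ ≤ max (ε ^ 2 / (16 * b * ρ b (ε / 2)))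
          (ε / (2 * 5 ^ (ρ b (ε / 2))))) →
      ‖y - PC y‖ ≤ ε := by
  intro b hb ε hε y hyb hδy
  have hm0 : 0 < m := by omega
  set N := ρ b (ε / 2) with hNdef
  set δ := max (ε ^ 2 / (16 * b * N)) (ε / (2 * 5 ^ N)) with hδdef
  have hδ0 : 0 ≤ δ :=
    le_trans (by positivity : (0:ℝ) ≤ ε ^ 2 / (16 * b * N)) (le_max_left _ _)
  by_cases hbe : (b : ℝ) ≤ ε
  · calc ‖y - PC y‖ ≤ ‖y - p‖ := (hPC y).2 p hp
      _ ≤ b := hyb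
      _ ≤ ε := hbe
  push_neg at hbe
  -- distance from y to every set is at most δ
  have hδy' : ∀ j ∈ Finset.Icc (1:ℤ) (m:ℤ), ‖y - P j y‖ ≤ δ := hδy
  have hdistZ : ∀ k : ℤ, 1 ≤ k → ‖y - P k y‖ ≤ δ := by
    intro k hk
    have hper : ∀ (s : ℕ) (z : ℤ), C (z + (s : ℤ) * m) = C z := by
      intro s
      induction s with
      | zero => intro z; simp
      | succ s ih =>
        intro z
        have h1 := hCper (z + (s:ℤ) * m)
        have h2 : z + ((s+1 : ℕ) : ℤ) * m = (z + (s:ℤ) * m) + m := by push_cast; ring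
        rw [h2, h1, ih]
    have hmz : (0:ℤ) < (m:ℤ) := by exact_mod_cast hm0
    have hj1 : 1 ≤ (k - 1) % (m:ℤ) + 1 := by
      have := Int.emod_nonneg (k-1) (ne_of_gt hmz); omega
    have hjm : (k - 1) % (m:ℤ) + 1 ≤ m := by
      have := Int.emod_lt_of_pos (k-1) hmz; omega
    have ht0 : 0 ≤ (k - 1) / (m:ℤ) := Int.ediv_nonneg (by omega) (le_of_lt hmz)
    have hkj : k = ((k - 1) % (m:ℤ) + 1) + ((((k-1)/(m:ℤ)).toNat : ℤ)) * m := by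
      rw [Int.toNat_of_nonneg ht0]
      linear_combination -Int.mul_ediv_add_emod (k - 1) (m : ℤ)
    have hCk : C k = C ((k - 1) % (m:ℤ) + 1) := by
      conv_lhs => rw [hkj]
      exact hper _ _
    have hPm : P ((k - 1) % (m:ℤ) + 1) y ∈ C k := by rw [hCk]; exact (hP _ y).1
    calc ‖y - P k y‖ ≤ ‖y - P ((k - 1) % (m:ℤ) + 1) y‖ := (hP k y).2 _ hPm
      _ ≤ δ := hδy' _ (Finset.mem_Icc.2 ⟨hj1, hjm⟩)
  have hdist : ∀ t : ℕ, ‖y - P ((t + 1 : ℕ) : ℤ) y‖ ≤ δ := by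
    intro t
    exact hdistZ _ (by exact_mod_cast Nat.succ_le_succ (Nat.zero_le t))
  -- the Dykstra run started at y
  have h1 : ∀ k : ℤ, k ≤ 0 → dq m P y k.toNat = 0 := by
    intro k hk; rw [Int.toNat_of_nonpos hk, dq_zero]
  have hA : ∀ t : ℕ, dykA m P y t = dx m P y t + dq m P y (((t:ℤ) + 1 - (m:ℤ)).toNat) := by
    intro t
    rw [show dykA m P y t
        = dx m P y t + (if m < t + 1 then dq m P y (t + 1 - m) else 0) from rfl]
    by_cases hmt : m < t + 1
    · rw [if_pos hmt]
      congr 2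
      omega
    · rw [if_neg hmt]
      rw [show (((t:ℤ) + 1 - (m:ℤ)).toNat) = 0 by omega, dq_zero]
  have h2 : ∀ n : ℤ, 1 ≤ n →
      dx m P y n.toNat = P n (dx m P y (n-1).toNat + dq m P y (n - m).toNat) := by
    intro n hn
    obtain ⟨t, rfl⟩ : ∃ t : ℕ, n = (t:ℤ) + 1 := ⟨(n-1).toNat, by omega⟩
    have e1 : ((t:ℤ) + 1).toNat = t + 1 := by omega
    have e2 : ((t:ℤ) + 1 - 1).toNat = t := by omega
    have ecast : ((t + 1 : ℕ) : ℤ) = (t:ℤ) + 1 := by push_cast; ring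
    rw [e1, e2, dx_succ hm0, ecast, hA t]
  have h3 : ∀ n : ℤ, 1 ≤ n →
      dq m P y n.toNat = dx m P y (n-1).toNat + dq m P y (n - m).toNat - dx m P y n.toNat := by
    intro n hn
    obtain ⟨t, rfl⟩ : ∃ t : ℕ, n = (t:ℤ) + 1 := ⟨(n-1).toNat, by omega⟩
    have e1 : ((t:ℤ) + 1).toNat = t + 1 := by omega
    have e2 : ((t:ℤ) + 1 - 1).toNat = t := by omega
    rw [e1, e2, dq_succ hm0, hA t]
  have hb0 : ‖(fun k : ℤ => dx m P y k.toNat) 0 - p‖ ≤ (b:ℝ) := by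
    simpa [dx_zero] using hyb
  have hconv := hρ (fun k : ℤ => dx m P y k.toNat) (fun k : ℤ => dq m P y k.toNat)
    (fun k hk => h1 k hk) (fun n hn => h2 n hn) (fun n hn => h3 n hn)
    b hb0 (ε/2) (by linarith) N le_rfl
  have hconv' : ‖dx m P y N - PC y‖ ≤ ε / 2 := by
    simpa [dx_zero, show ((N:ℕ):ℤ).toNat = N by omega] using hconv
  -- the drift estimate
  have hdrift := dyk_drift hm0 C hCconv hCper P hP y δ hδ0 hdist N
  -- numeric bound
  have hNδ : (N:ℝ) * δ ^ 2 ≤ (ε/2)^2 := by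
    rcases max_cases (ε ^ 2 / (16 * b * N)) (ε / (2 * 5 ^ N)) with ⟨hδeq, hAB⟩ | ⟨hδeq, hAB⟩
    · -- δ = ε²/(16 b N)
      have hδA : δ = ε ^ 2 / (16 * b * N) := by rw [hδdef, hδeq]
      rcases Nat.eq_zero_or_pos N with h0 | hNpos
      · rw [h0]; simp
        positivity
      · have hN1 : (1:ℝ) ≤ (N:ℝ) := by exact_mod_cast hNpos
        have hb1 : (1:ℝ) ≤ (b:ℝ) := by exact_mod_cast hb
        have hden : (0:ℝ) < 16 * b * N := by positivity
        have hδ2 : δ ≤ ε ^ 2 / (16 * b * N) := le_of_eq hδA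
        have hδb : δ ≤ (b:ℝ) := by
          rw [hδA, div_le_iff₀ hden]
          nlinarith [hε, hbe, hN1, hb1, sq_nonneg ((b:ℝ) - ε),
            mul_nonneg (sq_nonneg (b:ℝ)) (sub_nonneg.2 hN1)]
        have hs1 : (N:ℝ) * δ * δ ≤ (N:ℝ) * δ * (ε ^ 2 / (16 * b * N)) :=
          mul_le_mul_of_nonneg_left hδ2 (by positivity)
        have hs2 : (N:ℝ) * δ * (ε ^ 2 / (16 * b * N)) = δ * ε ^ 2 / (16 * b) := by
          field_simp
        have hs3 : δ * ε ^ 2 / (16 * b) ≤ (ε/2)^2 := by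
          rw [div_le_iff₀ (by positivity : (0:ℝ) < 16 * b)]
          nlinarith [sq_nonneg ε, mul_nonneg (sub_nonneg.2 hδb) (sq_nonneg ε), hb1]
        calc (N:ℝ) * δ ^ 2 = (N:ℝ) * δ * δ := by ring
          _ ≤ (N:ℝ) * δ * (ε ^ 2 / (16 * b * N)) := hs1
          _ = δ * ε ^ 2 / (16 * b) := hs2
          _ ≤ (ε/2)^2 := hs3
    · -- δ = ε/(2·5^N)
      have hδB : δ = ε / (2 * 5 ^ N) := by rw [hδdef, hδeq]
      have h5pos : (0:ℝ) < (5:ℝ) ^ N := by positivity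
      have h25 : (N:ℕ) < 25 ^ N :=
        lt_of_lt_of_le (Nat.lt_two_pow_self (n := N)) (Nat.pow_le_pow_left (by norm_num) N)
      have h5 : (N:ℝ) ≤ ((5:ℝ) ^ N) ^ 2 := by
        have e25 : ((5:ℝ) ^ N) ^ 2 = (25:ℝ) ^ N := by
          rw [← pow_mul, mul_comm, pow_mul]
          norm_num
        rw [e25]
        exact_mod_cast le_of_lt h25
      have h5ne : ((5:ℝ) ^ N) ≠ 0 := ne_of_gt h5pos
      calc (N:ℝ) * δ ^ 2 ≤ ((5:ℝ) ^ N) ^ 2 * δ ^ 2 :=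
            mul_le_mul_of_nonneg_right h5 (sq_nonneg δ)
        _ = (ε/2)^2 := by
            rw [hδB, div_pow, mul_pow]
            field_simp
  have hdle : ‖y - dx m P y N‖ ≤ ε / 2 := by
    have h := hdrift.trans hNδ
    have hnn : 0 ≤ ‖dx m P y N - y‖ := norm_nonneg _
    rw [norm_sub_rev]
    nlinarith [h, hnn, hε]
  calc ‖y - PC y‖ ≤ ‖y - dx m P y N‖ + ‖dx m P y N - PC y‖ := by
        have := dist_triangle y (dx m P y N) (PC y)
        simpa [dist_eq_norm] using this
    _ ≤ ε/2 + ε/2 := add_le_add hdle hconv'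
    _ = ε := by ring
end
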